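/- arXiv:2401.17614 — 5 statements merged into one kernel-verified Lean document; each statement's English description precedes it below -/
import Mathlib

section
/- Let N ≥ 2 be a natural number, r ∈ (0,1), and let w_j = r·e^{2πi j/N} for j = 0,…,N−1 be N equally spaced points on the circle of radius r. Then the product over j = 1,…,N−1 of ρ(w_0, w_j), where ρ is the pseudohyperbolic metric, equals N·r^{N−1}·(1 − r²)/(1 − r^{2N}). -/
open Metric Real

/-- The pseudohyperbolic metric on the unit disk. -/
noncomputable def pRho (z w : ℂ) : ℝ :=
  ‖(z - w) / (1 - (starRingEnd ℂ) w * z)‖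

open Polynomial

/-- For `N ≥ 2` equally spaced points `w_j = r·e^{2πij/N}` on the circle of radius
`r ∈ (0,1)`, the product over `j = 1,…,N−1` of `ρ(w_0, w_j)` equals
`N·r^{N−1}·(1−r²)/(1−r^{2N})`. -/
theorem pRho_product_equally_spaced (N : ℕ) (hN : 2 ≤ N) (r : ℝ) (hr : r ∈ Set.Ioo (0:ℝ) 1)
    (w : ℕ → ℂ)
    (hw : ∀ j, w j = (r : ℂ) * Complex.exp (2 * Real.pi * Complex.I * j / N)) :
    ∏ j ∈ Finset.Ico 1 N, pRho (w 0) (w j)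
      = N * r ^ (N - 1) * (1 - r ^ 2) / (1 - r ^ (2 * N)) := by
  obtain ⟨hr0, hr1⟩ := hr
  set ζ : ℂ := Complex.exp (2 * Real.pi * Complex.I / N) with hζdef
  have hN0 : (N:ℕ) ≠ 0 := by omega
  have hζ : IsPrimitiveRoot ζ N := Complex.isPrimitiveRoot_exp N hN0
  set c : ℂ := (r : ℂ) with hcdef
  have hc : c ≠ 0 := by
    simp [hcdef, Complex.ofReal_ne_zero, ne_of_gt hr0]
  have hwz : ∀ j, w j = c * ζ ^ j := by
    intro j
    rw [hw, ← Complex.exp_nat_mul]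
    congr 2
    ring
  -- polynomial identity
  have hP : (X - C (1:ℂ)) * ∏ j ∈ Finset.Ico 1 N, (X - C (ζ^j)) = (X:ℂ[X])^N - C 1 := by
    rw [X_pow_sub_C_eq_prod hζ (by omega : 0 < N) (one_pow N),
      Finset.range_eq_Ico, Finset.prod_eq_prod_Ico_succ_bot (by omega : 0 < N)]
    simp
  have hQ : (X - C (1:ℂ)) * ∑ i ∈ Finset.range N, (X:ℂ[X])^i = (X:ℂ[X])^N - C 1 := by
    rw [mul_comm, C_1]
    exact geom_sum_mul _ _
  have hkeyP : ∏ j ∈ Finset.Ico 1 N, (X - C (ζ^j)) = ∑ i ∈ Finset.range N, (X:ℂ[X])^i :=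
    mul_left_cancel₀ (X_sub_C_ne_zero 1) (hP.trans hQ.symm)
  have key : ∀ x : ℂ, ∏ j ∈ Finset.Ico 1 N, (x - ζ^j) = ∑ i ∈ Finset.range N, x^i := by
    intro x
    have := congrArg (Polynomial.eval x) hkeyP
    simpa [eval_prod, eval_finset_sum] using this
  -- numerator
  have hnum : ∏ j ∈ Finset.Ico 1 N, (w 0 - w j) = c^(N-1) * N := by
    have h1 : ∀ j ∈ Finset.Ico 1 N, w 0 - w j = c * ((1:ℂ) - ζ^j) := by
      intro j _
      rw [hwz, hwz]
      simp [mul_sub]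
    rw [Finset.prod_congr rfl h1, Finset.prod_mul_distrib, Finset.prod_const, Nat.card_Ico,
      key 1]
    simp
  -- denominator
  have hx : c^2 ≠ 0 := pow_ne_zero _ hc
  have hden : ∏ j ∈ Finset.Ico 1 N, ((1:ℂ) - c^2 * ζ^j) = ∑ i ∈ Finset.range N, (c^2)^i := by
    have h1 : ∀ j ∈ Finset.Ico 1 N, (1:ℂ) - c^2 * ζ^j = c^2 * ((c^2)⁻¹ - ζ^j) := by
      intro j _
      field_simp
    rw [Finset.prod_congr rfl h1, Finset.prod_mul_distrib, Finset.prod_const, Nat.card_Ico,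
      key ((c^2)⁻¹), Finset.mul_sum]
    rw [← Finset.sum_range_reflect (fun i => (c^2)^i) N]
    refine Finset.sum_congr rfl fun i hi => ?_
    simp only [Finset.mem_range] at hi
    have h2 : (c^2)^(N-1) = (c^2)^(N-1-i) * (c^2)^i := by
      rw [← pow_add]; congr 1; omega
    rw [h2, inv_pow, mul_assoc, mul_inv_cancel₀ (pow_ne_zero _ hx), mul_one]
  -- rewrite each factor
  have habs : ∀ j, pRho (w 0) (w j)
      = ‖w 0 - w j‖ / ‖(1:ℂ) - c^2 * ζ^j‖ := by
    intro j
    unfold pRho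
    rw [norm_div]
    congr 1
    rw [← Complex.norm_conj]
    congr 1
    simp only [map_sub, map_one, map_mul, Complex.conj_conj, hwz]
    rw [hcdef]
    simp [Complex.conj_ofReal]
    ring
  calc ∏ j ∈ Finset.Ico 1 N, pRho (w 0) (w j)
      = (∏ j ∈ Finset.Ico 1 N, ‖w 0 - w j‖) /
        (∏ j ∈ Finset.Ico 1 N, ‖(1:ℂ) - c^2 * ζ^j‖) := by
        rw [← Finset.prod_div_distrib]
        exact Finset.prod_congr rfl fun j _ => habs j
    _ = ‖c^(N-1) * N‖ / ‖∑ i ∈ Finset.range N, (c^2)^i‖ := by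
        rw [← norm_prod, ← norm_prod, hnum, hden]
    _ = (r^(N-1) * N) / (∑ i ∈ Finset.range N, (r^2)^i) := by
        have h1 : (c^(N-1) * N : ℂ) = ((r^(N-1) * N : ℝ) : ℂ) := by push_cast [hcdef]; ring
        have h2 : (∑ i ∈ Finset.range N, (c^2)^i : ℂ)
            = ((∑ i ∈ Finset.range N, (r^2)^i : ℝ) : ℂ) := by push_cast [hcdef]; ring
        rw [h1, h2, Complex.norm_real, Complex.norm_real, Real.norm_eq_abs, Real.norm_eq_abs,
          abs_of_nonneg (by positivity), abs_of_nonneg]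
        refine Finset.sum_nonneg fun i _ => by positivity
    _ = N * r ^ (N - 1) * (1 - r ^ 2) / (1 - r ^ (2 * N)) := by
        have hgeom : (1 - r^2) * ∑ i ∈ Finset.range N, (r^2)^i = 1 - r^(2*N) := by
          have := geom_sum_mul (r^2) N
          rw [pow_mul]
          linarith [this]
        have hS : (0:ℝ) < ∑ i ∈ Finset.range N, (r^2)^i := by
          refine Finset.sum_pos (fun i _ => by positivity) ⟨0, by simp; omega⟩
        have hd : (1:ℝ) - r^(2*N) ≠ 0 := by
          have : r^(2*N) < 1 := pow_lt_one₀ (le_of_lt hr0) hr1 (by omega)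
          linarith
        have hS' : (∑ i ∈ Finset.range N, (r^2)^i) ≠ 0 := ne_of_gt hS
        have hr2 : (1:ℝ) - r^2 ≠ 0 := by nlinarith
        rw [← hgeom]
        field_simp
end

section
/- Let z ∈ 𝔻, R, t ∈ (0,1), and let w ∈ 𝔻 satisfy ρ(z,w) ≤ tR. Then for every y ∈ 𝔻 with ρ(y,z) ≥ R one has ρ(y,z)^a ≤ ρ(y,w) ≤ ρ(y,z)^b, where a = ln((1−tR²)/((1−t)R)) / ln(1/R) and b = ln((1+tR²)/((1+t)R)) / ln(1/R). -/
open Metric Real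

lemma aux_ne {u v : ℂ} (hu : ‖u‖ < 1) (hv : ‖v‖ < 1) :
    (1 : ℂ) - u * v ≠ 0 := by
  intro h
  have : (1 : ℂ) = u * v := by linear_combination h
  have h2 : ‖(u * v)‖ < 1 := by
    calc ‖(u * v)‖ = ‖u‖ * ‖v‖ := norm_mul _ _
    _ < 1 := by nlinarith [norm_nonneg u, norm_nonneg v]
  rw [← this] at h2; simp at h2

lemma normSq_one_sub (a b : ℂ) :
    Complex.normSq (1 - (starRingEnd ℂ) b * a)
      = 1 - 2 * ((starRingEnd ℂ) b * a).re + Complex.normSq a * Complex.normSq b := by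
  simp [Complex.normSq_apply, Complex.sub_re, Complex.sub_im, Complex.mul_re, Complex.mul_im,
    Complex.conj_re, Complex.conj_im]
  ring

lemma normSq_sub' (a b : ℂ) :
    Complex.normSq (a - b)
      = Complex.normSq a + Complex.normSq b - 2 * ((starRingEnd ℂ) b * a).re := by
  simp [Complex.normSq_apply, Complex.sub_re, Complex.sub_im, Complex.mul_re, Complex.mul_im,
    Complex.conj_re, Complex.conj_im]
  ring

lemma pRho_lt_one {a b : ℂ} (ha : ‖a‖ < 1) (hb : ‖b‖ < 1) :
    pRho a b < 1 := by
  have hne : (1 : ℂ) - (starRingEnd ℂ) b * a ≠ 0 := by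
    apply aux_ne _ ha; rwa [Complex.norm_conj]
  have hpos : 0 < ‖(1 - (starRingEnd ℂ) b * a)‖ := by
    simpa [norm_pos_iff] using hne
  rw [pRho, norm_div, div_lt_one hpos]
  have h1 : ‖(a - b)‖ ^ 2 < ‖(1 - (starRingEnd ℂ) b * a)‖ ^ 2 := by
    rw [Complex.sq_norm, Complex.sq_norm, normSq_sub', normSq_one_sub]
    have h2 : Complex.normSq a < 1 := by rw [← Complex.sq_norm]; nlinarith [norm_nonneg a]
    have h3 : Complex.normSq b < 1 := by rw [← Complex.sq_norm]; nlinarith [norm_nonneg b]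
    nlinarith
  nlinarith [norm_nonneg (a - b), hpos]

lemma tri_aux (r s x N0 N1 : ℝ) (hr : 0 ≤ r) (hr1 : r < 1) (hs : 0 ≤ s) (hs1 : s < 1)
    (hx : |x| ≤ r * s) (hN0 : N0 = r ^ 2 + s ^ 2 - 2 * x)
    (hN1 : N1 = 1 - 2 * x + r ^ 2 * s ^ 2) :
    N0 * (1 + r * s) ^ 2 ≤ (r + s) ^ 2 * N1 ∧ (r - s) ^ 2 * N1 ≤ N0 * (1 - r * s) ^ 2 := by
  have h1 := abs_le.1 hx
  constructor
  · nlinarith [mul_nonneg (mul_nonneg (by nlinarith : (0:ℝ) ≤ 1 - r^2) (by nlinarith : (0:ℝ) ≤ 1 - s^2)) (by linarith [h1.1] : (0:ℝ) ≤ x + r*s)]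
  · nlinarith [mul_nonneg (mul_nonneg (by nlinarith : (0:ℝ) ≤ 1 - r^2) (by nlinarith : (0:ℝ) ≤ 1 - s^2)) (by linarith [h1.2] : (0:ℝ) ≤ r*s - x)]

lemma le_of_sq_le_sq' {X Y : ℝ} (hX : 0 ≤ X) (hY : 0 ≤ Y) (h : X ^ 2 ≤ Y ^ 2) : X ≤ Y := by
  nlinarith

lemma tri (a b : ℂ) (ha : ‖a‖ < 1) (hb : ‖b‖ < 1) :
    (‖a‖ - ‖b‖) / (1 - ‖a‖ * ‖b‖)
        ≤ ‖(a - b)‖ / ‖(1 - (starRingEnd ℂ) b * a)‖ ∧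
    ‖(a - b)‖ / ‖(1 - (starRingEnd ℂ) b * a)‖
        ≤ (‖a‖ + ‖b‖) / (1 + ‖a‖ * ‖b‖) := by
  set r := ‖a‖ with hrdef
  set s := ‖b‖ with hsdef
  have hr : 0 ≤ r := norm_nonneg a
  have hs : 0 ≤ s := norm_nonneg b
  set x := ((starRingEnd ℂ) b * a).re with hxdef
  have hx : |x| ≤ r * s := by
    calc |x| ≤ ‖((starRingEnd ℂ) b * a)‖ := Complex.abs_re_le_norm _
    _ = r * s := by rw [norm_mul, Complex.norm_conj]; ring
  have hne : (1 : ℂ) - (starRingEnd ℂ) b * a ≠ 0 := by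
    apply aux_ne _ ha; rwa [Complex.norm_conj]
  set B := ‖(1 - (starRingEnd ℂ) b * a)‖ with hBdef
  have hBpos : 0 < B := by simpa [hBdef, norm_pos_iff] using hne
  set A := ‖(a - b)‖ with hAdef
  have hApos : 0 ≤ A := norm_nonneg _
  have hN0 : A ^ 2 = r ^ 2 + s ^ 2 - 2 * x := by
    rw [hAdef, Complex.sq_norm, normSq_sub', hrdef, hsdef, Complex.sq_norm, Complex.sq_norm]
  have hN1 : B ^ 2 = 1 - 2 * x + r ^ 2 * s ^ 2 := by
    rw [hBdef, Complex.sq_norm, normSq_one_sub, hrdef, hsdef, Complex.sq_norm, Complex.sq_norm]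
  obtain ⟨h1, h2⟩ := tri_aux r s x (A ^ 2) (B ^ 2) hr ha hs hb hx hN0 hN1
  have hrs1 : r * s < 1 := by nlinarith
  constructor
  · rcases le_or_gt (r - s) 0 with h | h
    · exact le_trans (div_nonpos_of_nonpos_of_nonneg h (by linarith)) (div_nonneg hApos hBpos.le)
    · rw [div_le_div_iff₀ (by linarith) hBpos]
      refine le_of_sq_le_sq' (mul_nonneg h.le hBpos.le) (mul_nonneg hApos (by linarith)) ?_
      calc ((r - s) * B) ^ 2 = (r - s) ^ 2 * B ^ 2 := by ring
      _ ≤ A ^ 2 * (1 - r * s) ^ 2 := h2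
      _ = (A * (1 - r * s)) ^ 2 := by ring
  · rw [div_le_div_iff₀ hBpos (by nlinarith)]
    refine le_of_sq_le_sq' (mul_nonneg hApos (by nlinarith)) (mul_nonneg (by linarith) hBpos.le) ?_
    calc (A * (1 + r * s)) ^ 2 = A ^ 2 * (1 + r * s) ^ 2 := by ring
    _ ≤ (r + s) ^ 2 * B ^ 2 := h1
    _ = ((r + s) * B) ^ 2 := by ring

lemma pRho_triangle {z y w : ℂ} (hz : ‖z‖ < 1) (hy : ‖y‖ < 1)
    (hw : ‖w‖ < 1) :
    (pRho y z - pRho z w) / (1 - pRho y z * pRho z w) ≤ pRho y w ∧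
    pRho y w ≤ (pRho y z + pRho z w) / (1 + pRho y z * pRho z w) := by
  have hcz : ‖((starRingEnd ℂ) z)‖ < 1 := by rwa [Complex.norm_conj]
  have hcw : ‖((starRingEnd ℂ) w)‖ < 1 := by rwa [Complex.norm_conj]
  have hzy : (1 : ℂ) - (starRingEnd ℂ) z * y ≠ 0 := aux_ne hcz hy
  have hzw : (1 : ℂ) - (starRingEnd ℂ) z * w ≠ 0 := aux_ne hcz hw
  have hwy : (1 : ℂ) - (starRingEnd ℂ) w * y ≠ 0 := aux_ne hcw hy
  have hzz : (1 : ℂ) - (starRingEnd ℂ) z * z ≠ 0 := aux_ne hcz hz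
  have hzwc : (1 : ℂ) - z * (starRingEnd ℂ) w ≠ 0 := aux_ne hz hcw
  set A : ℂ := (z - y) / (1 - (starRingEnd ℂ) z * y) with hAdef
  set B : ℂ := (z - w) / (1 - (starRingEnd ℂ) z * w) with hBdef
  have hAabs : ‖A‖ = pRho y z := by
    rw [hAdef, pRho, norm_div, norm_div, ← neg_sub y z, norm_neg]
  have hBabs : ‖B‖ = pRho z w := by
    rw [hBdef, pRho, norm_div, norm_div]
    congr 1
    rw [← Complex.norm_conj (1 - (starRingEnd ℂ) w * z)]
    congr 1
    simp only [map_sub, map_one, map_mul, Complex.conj_conj]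
    ring
  have hA1 : ‖A‖ < 1 := by rw [hAabs]; exact pRho_lt_one hy hz
  have hB1 : ‖B‖ < 1 := by rw [hBabs]; exact pRho_lt_one hz hw
  have hconjB : (starRingEnd ℂ) B
      = ((starRingEnd ℂ) z - (starRingEnd ℂ) w) / (1 - z * (starRingEnd ℂ) w) := by
    rw [hBdef, map_div₀, map_sub, map_sub, map_one, map_mul, Complex.conj_conj]
  have idn : (A - B) * ((1 - (starRingEnd ℂ) z * y) * (1 - (starRingEnd ℂ) z * w))
      = (w - y) * (1 - (starRingEnd ℂ) z * z) := by
    rw [hAdef, hBdef, div_sub_div _ _ hzy hzw, div_mul_cancel₀ _ (mul_ne_zero hzy hzw)]; ring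
  have idd : (1 - (starRingEnd ℂ) B * A) * ((1 - z * (starRingEnd ℂ) w) * (1 - (starRingEnd ℂ) z * y))
      = (1 - (starRingEnd ℂ) z * z) * (1 - (starRingEnd ℂ) w * y) := by
    rw [hconjB, hAdef, div_mul_div_comm, sub_mul, one_mul, div_mul_cancel₀ _ (mul_ne_zero hzwc hzy)]; ring
  -- pass to absolute values
  have habsn := congrArg (fun x : ℂ => ‖x‖) idn
  have habsd := congrArg (fun x : ℂ => ‖x‖) idd
  simp only [norm_mul] at habsn habsd
  have hq : ‖(1 - z * (starRingEnd ℂ) w)‖ = ‖(1 - (starRingEnd ℂ) z * w)‖ := by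
    rw [show (1 : ℂ) - z * (starRingEnd ℂ) w = (starRingEnd ℂ) ((1 : ℂ) - (starRingEnd ℂ) z * w) by
      simp [map_sub, map_mul, Complex.conj_conj], Complex.norm_conj]
  rw [hq] at habsd
  have hDne : (1 : ℂ) - (starRingEnd ℂ) B * A ≠ 0 := by
    have := aux_ne (u := (starRingEnd ℂ) B) (v := A) (by rwa [Complex.norm_conj]) hA1
    exact this
  have hkey : pRho y w = ‖(A - B)‖ / ‖(1 - (starRingEnd ℂ) B * A)‖ := by
    have hm : pRho y w = ‖(w - y)‖ / ‖(1 - (starRingEnd ℂ) w * y)‖ := by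
      rw [pRho, norm_div, ← neg_sub w y, norm_neg]
    rw [hm]
    rw [div_eq_div_iff ((norm_ne_zero_iff.mpr hwy)) ((norm_ne_zero_iff.mpr hDne))]
    have hqp : ‖(1 - (starRingEnd ℂ) z * w)‖ * ‖(1 - (starRingEnd ℂ) z * y)‖ ≠ 0 :=
      mul_ne_zero ((norm_ne_zero_iff.mpr hzw)) ((norm_ne_zero_iff.mpr hzy))
    apply mul_right_cancel₀ hqp
    calc ‖(w - y)‖ * ‖(1 - (starRingEnd ℂ) B * A)‖
          * (‖(1 - (starRingEnd ℂ) z * w)‖ * ‖(1 - (starRingEnd ℂ) z * y)‖)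
        = ‖(w - y)‖ * (‖(1 - (starRingEnd ℂ) B * A)‖
          * (‖(1 - (starRingEnd ℂ) z * w)‖ * ‖(1 - (starRingEnd ℂ) z * y)‖)) := by ring
      _ = ‖(w - y)‖ * (‖(1 - (starRingEnd ℂ) z * z)‖ * ‖(1 - (starRingEnd ℂ) w * y)‖) := by rw [habsd]
      _ = (‖(w - y)‖ * ‖(1 - (starRingEnd ℂ) z * z)‖) * ‖(1 - (starRingEnd ℂ) w * y)‖ := by ring
      _ = (‖(A - B)‖ * (‖(1 - (starRingEnd ℂ) z * y)‖ * ‖(1 - (starRingEnd ℂ) z * w)‖)) * ‖(1 - (starRingEnd ℂ) w * y)‖ := by rw [habsn]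
      _ = ‖(A - B)‖ * ‖(1 - (starRingEnd ℂ) w * y)‖
          * (‖(1 - (starRingEnd ℂ) z * w)‖ * ‖(1 - (starRingEnd ℂ) z * y)‖) := by ring
  rw [hkey, ← hAabs, ← hBabs]
  exact tri A B hA1 hB1

lemma concave_bound (d R s : ℝ) (hd0 : 0 < d) (hdR : d < R) (hR1 : R < 1) (hR0 : 0 < R)
    (hs : R ≤ s) (hs1 : s < 1) :
    s ^ ((Real.log (R - d) - Real.log (1 - d * R)) / Real.log R) ≤ (s - d) / (1 - d * s) := by
  have hd1 : d < 1 := hdR.trans hR1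
  set L := Real.log R with hLdef
  have hL0 : L < 0 := Real.log_neg hR0 hR1
  set D : Set ℝ := Set.Icc L 0 with hDdef
  have hmem : ∀ x ∈ D, R ≤ Real.exp x ∧ Real.exp x ≤ 1 := by
    intro x hx
    constructor
    · calc R = Real.exp L := by rw [hLdef, Real.exp_log hR0]
      _ ≤ Real.exp x := Real.exp_le_exp.2 hx.1
    · calc Real.exp x ≤ Real.exp 0 := Real.exp_le_exp.2 hx.2
      _ = 1 := Real.exp_zero
  have hpos1 : ∀ x ∈ D, 0 < Real.exp x - d := fun x hx => by
    have := (hmem x hx).1; linarith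
  have hpos2 : ∀ x ∈ D, 0 < 1 - d * Real.exp x := fun x hx => by
    have := (hmem x hx).2
    nlinarith [Real.exp_pos x]
  set u : ℝ → ℝ := fun x => Real.log (Real.exp x - d) - Real.log (1 - d * Real.exp x) with hudef
  have hcont : ContinuousOn u D := by
    apply ContinuousOn.sub
    · exact (Real.continuous_exp.continuousOn.sub continuousOn_const).log
        (fun x hx => (hpos1 x hx).ne')
    · exact (continuousOn_const.sub (continuousOn_const.mul Real.continuous_exp.continuousOn)).log
        (fun x hx => (hpos2 x hx).ne')
  set u' : ℝ → ℝ := fun x =>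
    Real.exp x / (Real.exp x - d) - -(d * Real.exp x) / (1 - d * Real.exp x) with hu'def
  have hintD : interior D ⊆ D := interior_subset
  have hder1 : ∀ x ∈ interior D, HasDerivAt u (u' x) x := by
    intro x hx
    have h1 : HasDerivAt (fun x => Real.exp x - d) (Real.exp x) x :=
      (Real.hasDerivAt_exp x).sub_const d
    have h3 : HasDerivAt (fun x => 1 - d * Real.exp x) (-(d * Real.exp x)) x :=
      ((Real.hasDerivAt_exp x).const_mul d).const_sub 1
    exact (h1.log (hpos1 x (hintD hx)).ne').sub (h3.log (hpos2 x (hintD hx)).ne')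
  set u'' : ℝ → ℝ := fun x =>
    (Real.exp x * (Real.exp x - d) - Real.exp x * Real.exp x) / (Real.exp x - d) ^ 2 -
      (-(d * Real.exp x) * (1 - d * Real.exp x) - -(d * Real.exp x) * -(d * Real.exp x)) /
        (1 - d * Real.exp x) ^ 2 with hu''def
  have hder2 : ∀ x ∈ interior D, HasDerivAt u' (u'' x) x := by
    intro x hx
    have h1 : HasDerivAt (fun x => Real.exp x - d) (Real.exp x) x :=
      (Real.hasDerivAt_exp x).sub_const d
    have h3 : HasDerivAt (fun x => 1 - d * Real.exp x) (-(d * Real.exp x)) x :=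
      ((Real.hasDerivAt_exp x).const_mul d).const_sub 1
    exact ((Real.hasDerivAt_exp x).div h1 (hpos1 x (hintD hx)).ne').sub
      ((((Real.hasDerivAt_exp x).const_mul d).neg).div h3 (hpos2 x (hintD hx)).ne')
  have hsign : ∀ x ∈ interior D, u'' x ≤ 0 := by
    intro x hx
    have hxD := hintD hx
    have e1 := hpos1 x hxD
    have e2 := hpos2 x hxD
    have he1 := (hmem x hxD).2
    have hepos := Real.exp_pos x
    rw [hu''def]
    dsimp only
    rw [div_sub_div _ _ (pow_ne_zero 2 e1.ne') (pow_ne_zero 2 e2.ne')]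
    apply div_nonpos_of_nonpos_of_nonneg
    · nlinarith [mul_nonneg (mul_nonneg (mul_nonneg (mul_pos hd0 hepos).le
        (by linarith : (0:ℝ) ≤ 1 - Real.exp x)) (by linarith : (0:ℝ) ≤ 1 + d))
        (mul_nonneg (by linarith : (0:ℝ) ≤ 1 - d) (by linarith : (0:ℝ) ≤ 1 + Real.exp x))]
    · positivity
  have hconc : ConcaveOn ℝ D u :=
    concaveOn_of_hasDerivWithinAt2_nonpos (convex_Icc L 0) hcont
      (fun x hx => (hder1 x hx).hasDerivWithinAt) (fun x hx => (hder2 x hx).hasDerivWithinAt) hsign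
  -- apply concavity at x = log s
  have hs0 : 0 < s := lt_of_lt_of_le hR0 hs
  set x := Real.log s with hxdef
  have hxL : L ≤ x := Real.log_le_log hR0 hs
  have hx0 : x ≤ 0 := (Real.log_nonpos (by linarith) hs1.le)
  have hlam0 : 0 ≤ x / L := by
    rw [div_nonneg_iff]; right; exact ⟨hx0, hL0.le⟩
  have hlam1 : x / L ≤ 1 := by
    rw [div_le_one_of_neg hL0]; exact hxL
  have hcomb := hconc.2 (Set.mem_Icc.2 ⟨le_refl L, hL0.le⟩) (Set.mem_Icc.2 ⟨hL0.le, le_refl 0⟩)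
    hlam0 (by linarith : (0:ℝ) ≤ 1 - x / L) (by ring)
  have hxrep : (x / L) • L + (1 - x / L) • (0:ℝ) = x := by
    rw [smul_eq_mul, smul_eq_mul, mul_zero, add_zero, div_mul_cancel₀ _ hL0.ne]
  rw [hxrep] at hcomb
  have huL : u L = Real.log (R - d) - Real.log (1 - d * R) := by
    rw [hudef]; dsimp only; rw [hLdef, Real.exp_log hR0]
  have hu0 : u 0 = 0 := by
    rw [hudef]; dsimp only; rw [Real.exp_zero, mul_one, sub_self]
  rw [huL, hu0] at hcomb
  have hux : u x = Real.log ((s - d) / (1 - d * s)) := by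
    rw [hudef]; dsimp only; rw [hxdef, Real.exp_log hs0]
    rw [Real.log_div (by linarith) (by nlinarith)]
  have hgoal : ((Real.log (R - d) - Real.log (1 - d * R)) / L) * x ≤ u x := by
    calc ((Real.log (R - d) - Real.log (1 - d * R)) / L) * x
        = x / L * (Real.log (R - d) - Real.log (1 - d * R)) + (1 - x / L) * 0 := by ring
    _ ≤ u x := hcomb
  rw [Real.rpow_def_of_pos hs0]
  calc Real.exp (Real.log s * ((Real.log (R - d) - Real.log (1 - d * R)) / L))
      ≤ Real.exp (u x) := Real.exp_le_exp.2 (by rw [← hxdef, mul_comm]; exact hgoal)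
    _ = (s - d) / (1 - d * s) := by
        rw [hux, Real.exp_log (div_pos (by linarith) (by nlinarith))]


lemma convex_bound (d R s : ℝ) (hd0 : 0 < d) (hdR : d < R) (hR1 : R < 1) (hR0 : 0 < R)
    (hs : R ≤ s) (hs1 : s < 1) :
    (s + d) / (1 + d * s) ≤ s ^ ((Real.log (R + d) - Real.log (1 + d * R)) / Real.log R) := by
  have hd1 : d < 1 := hdR.trans hR1
  set L := Real.log R with hLdef
  have hL0 : L < 0 := Real.log_neg hR0 hR1
  set D : Set ℝ := Set.Icc L 0 with hDdef
  have hmem : ∀ x ∈ D, R ≤ Real.exp x ∧ Real.exp x ≤ 1 := by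
    intro x hx
    constructor
    · calc R = Real.exp L := by rw [hLdef, Real.exp_log hR0]
      _ ≤ Real.exp x := Real.exp_le_exp.2 hx.1
    · calc Real.exp x ≤ Real.exp 0 := Real.exp_le_exp.2 hx.2
      _ = 1 := Real.exp_zero
  have hpos1 : ∀ x : ℝ, 0 < Real.exp x + d := fun x => by positivity
  have hpos2 : ∀ x : ℝ, 0 < 1 + d * Real.exp x := fun x => by positivity
  set u : ℝ → ℝ := fun x => Real.log (Real.exp x + d) - Real.log (1 + d * Real.exp x) with hudef
  have hcont : ContinuousOn u D := by
    apply ContinuousOn.sub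
    · exact (Real.continuous_exp.continuousOn.add continuousOn_const).log
        (fun x hx => (hpos1 x).ne')
    · exact (continuousOn_const.add (continuousOn_const.mul Real.continuous_exp.continuousOn)).log
        (fun x hx => (hpos2 x).ne')
  set u' : ℝ → ℝ := fun x =>
    Real.exp x / (Real.exp x + d) - d * Real.exp x / (1 + d * Real.exp x) with hu'def
  have hintD : interior D ⊆ D := interior_subset
  have hder1 : ∀ x ∈ interior D, HasDerivAt u (u' x) x := by
    intro x hx
    have h1 : HasDerivAt (fun x => Real.exp x + d) (Real.exp x) x :=
      (Real.hasDerivAt_exp x).add_const d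
    have h3 : HasDerivAt (fun x => 1 + d * Real.exp x) (d * Real.exp x) x :=
      ((Real.hasDerivAt_exp x).const_mul d).const_add 1
    exact (h1.log (hpos1 x).ne').sub (h3.log (hpos2 x).ne')
  set u'' : ℝ → ℝ := fun x =>
    (Real.exp x * (Real.exp x + d) - Real.exp x * Real.exp x) / (Real.exp x + d) ^ 2 -
      (d * Real.exp x * (1 + d * Real.exp x) - d * Real.exp x * (d * Real.exp x)) /
        (1 + d * Real.exp x) ^ 2 with hu''def
  have hder2 : ∀ x ∈ interior D, HasDerivAt u' (u'' x) x := by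
    intro x hx
    have h1 : HasDerivAt (fun x => Real.exp x + d) (Real.exp x) x :=
      (Real.hasDerivAt_exp x).add_const d
    have h3 : HasDerivAt (fun x => 1 + d * Real.exp x) (d * Real.exp x) x :=
      ((Real.hasDerivAt_exp x).const_mul d).const_add 1
    exact ((Real.hasDerivAt_exp x).div h1 (hpos1 x).ne').sub
      (((Real.hasDerivAt_exp x).const_mul d).div h3 (hpos2 x).ne')
  have hsign : ∀ x ∈ interior D, 0 ≤ u'' x := by
    intro x hx
    have hxD := hintD hx
    have e1 := hpos1 x
    have e2 := hpos2 x
    have he1 := (hmem x hxD).2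
    have hepos := Real.exp_pos x
    rw [hu''def]
    dsimp only
    rw [div_sub_div _ _ (pow_ne_zero 2 e1.ne') (pow_ne_zero 2 e2.ne')]
    apply div_nonneg _ (by positivity)
    nlinarith [mul_nonneg (mul_nonneg (mul_nonneg (mul_pos hd0 hepos).le
      (by linarith : (0:ℝ) ≤ 1 - Real.exp x)) (by linarith : (0:ℝ) ≤ 1 + d))
      (mul_nonneg (by linarith : (0:ℝ) ≤ 1 - d) (by linarith : (0:ℝ) ≤ 1 + Real.exp x))]
  have hconv : ConvexOn ℝ D u :=
    convexOn_of_hasDerivWithinAt2_nonneg (convex_Icc L 0) hcont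
      (fun x hx => (hder1 x hx).hasDerivWithinAt) (fun x hx => (hder2 x hx).hasDerivWithinAt) hsign
  have hs0 : 0 < s := lt_of_lt_of_le hR0 hs
  set x := Real.log s with hxdef
  have hxL : L ≤ x := Real.log_le_log hR0 hs
  have hx0 : x ≤ 0 := (Real.log_nonpos (by linarith) hs1.le)
  have hlam0 : 0 ≤ x / L := by
    rw [div_nonneg_iff]; right; exact ⟨hx0, hL0.le⟩
  have hlam1 : x / L ≤ 1 := by
    rw [div_le_one_of_neg hL0]; exact hxL
  have hcomb := hconv.2 (Set.mem_Icc.2 ⟨le_refl L, hL0.le⟩) (Set.mem_Icc.2 ⟨hL0.le, le_refl 0⟩)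
    hlam0 (by linarith : (0:ℝ) ≤ 1 - x / L) (by ring)
  have hxrep : (x / L) • L + (1 - x / L) • (0:ℝ) = x := by
    rw [smul_eq_mul, smul_eq_mul, mul_zero, add_zero, div_mul_cancel₀ _ hL0.ne]
  rw [hxrep] at hcomb
  have huL : u L = Real.log (R + d) - Real.log (1 + d * R) := by
    rw [hudef]; dsimp only; rw [hLdef, Real.exp_log hR0]
  have hu0 : u 0 = 0 := by
    rw [hudef]; dsimp only; rw [Real.exp_zero, mul_one, sub_self]
  rw [huL, hu0] at hcomb
  have hux : u x = Real.log ((s + d) / (1 + d * s)) := by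
    rw [hudef]; dsimp only; rw [hxdef, Real.exp_log hs0]
    rw [Real.log_div (by linarith) (by nlinarith)]
  have hgoal : u x ≤ ((Real.log (R + d) - Real.log (1 + d * R)) / L) * x := by
    calc u x ≤ x / L * (Real.log (R + d) - Real.log (1 + d * R)) + (1 - x / L) * 0 := hcomb
    _ = ((Real.log (R + d) - Real.log (1 + d * R)) / L) * x := by ring
  rw [Real.rpow_def_of_pos hs0]
  calc (s + d) / (1 + d * s)
      = Real.exp (u x) := by
        rw [hux, Real.exp_log (div_pos (by linarith) (by nlinarith))]
    _ ≤ Real.exp (Real.log s * ((Real.log (R + d) - Real.log (1 + d * R)) / L)) :=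
        Real.exp_le_exp.2 (by rw [← hxdef, mul_comm]; exact hgoal)


lemma mono_aux (r c s0 : ℝ) (hs0 : 0 ≤ s0) (hsc : s0 ≤ c) (hcr : c < r) (hr1 : r < 1) :
    (r - c) / (1 - c * r) ≤ (r - s0) / (1 - r * s0) ∧
    (r + s0) / (1 + r * s0) ≤ (r + c) / (1 + c * r) := by
  have hc1 : c < 1 := hcr.trans hr1
  have hr0 : 0 < r := lt_of_le_of_lt hs0 (hsc.trans_lt hcr)
  have h1 : 0 < 1 - r * s0 := by nlinarith
  have h2 : 0 < 1 - c * r := by nlinarith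
  have h3 : 0 < 1 + r * s0 := by nlinarith
  have h4 : 0 < 1 + c * r := by nlinarith
  constructor
  · rw [div_le_div_iff₀ h2 h1]
    nlinarith [mul_nonneg (by linarith : (0:ℝ) ≤ c - s0) (by nlinarith : (0:ℝ) ≤ 1 - r ^ 2)]
  · rw [div_le_div_iff₀ h3 h4]
    nlinarith [mul_nonneg (by linarith : (0:ℝ) ≤ c - s0) (by nlinarith : (0:ℝ) ≤ 1 - r ^ 2)]

open Metric Real

/-- If `ρ(z,w) ≤ tR` then for every `y` with `ρ(y,z) ≥ R` one has
`ρ(y,z)^a ≤ ρ(y,w) ≤ ρ(y,z)^b` with the explicit exponents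
`a = ln((1−tR²)/((1−t)R))/ln(1/R)` and `b = ln((1+tR²)/((1+t)R))/ln(1/R)`. -/
theorem pRho_power_comparison (z w y : ℂ) (hz : z ∈ ball (0 : ℂ) 1)
    (hw : w ∈ ball (0 : ℂ) 1) (hy : y ∈ ball (0 : ℂ) 1)
    (R t : ℝ) (hR : R ∈ Set.Ioo (0:ℝ) 1) (ht : t ∈ Set.Ioo (0:ℝ) 1)
    (hzw : pRho z w ≤ t * R) (hyz : R ≤ pRho y z) :
    pRho y z ^ (Real.log ((1 - t * R ^ 2) / ((1 - t) * R)) / Real.log (1 / R))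
        ≤ pRho y w ∧
    pRho y w ≤
      pRho y z ^ (Real.log ((1 + t * R ^ 2) / ((1 + t) * R)) / Real.log (1 / R)) := by
  obtain ⟨hR0, hR1⟩ := hR
  obtain ⟨ht0, ht1⟩ := ht
  -- exponent identifications
  have hlogR : Real.log (1 / R) = -Real.log R := by rw [one_div, Real.log_inv]
  have hp1 : (0:ℝ) < 1 - t * R ^ 2 := by nlinarith
  have hp2 : (0:ℝ) < (1 - t) * R := by nlinarith
  have hp3 : (0:ℝ) < 1 + t * R ^ 2 := by nlinarith
  have hp4 : (0:ℝ) < (1 + t) * R := by nlinarith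
  have hz' : ‖z‖ < 1 := by
    simpa using mem_ball_zero_iff.1 hz
  have hw' : ‖w‖ < 1 := by
    simpa using mem_ball_zero_iff.1 hw
  have hy' : ‖y‖ < 1 := by
    simpa using mem_ball_zero_iff.1 hy
  obtain ⟨hlow, hupp⟩ := pRho_triangle hz' hy' hw'
  set r := pRho y z with hrdef
  set s0 := pRho z w with hs0def
  have hr1 : r < 1 := pRho_lt_one hy' hz'
  have hs0nn : 0 ≤ s0 := norm_nonneg _
  have htR : t * R < R := by nlinarith
  have hs0r : s0 ≤ t * R := hzw
  have hd0 : 0 < t * R := mul_pos ht0 hR0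
  have hrR : R ≤ r := hyz
  have hr0 : 0 < r := lt_of_lt_of_le hR0 hrR
  obtain ⟨low2, upp2⟩ := mono_aux r (t * R) s0 hs0nn hs0r (lt_of_lt_of_le htR hrR) hr1
  have hcb := concave_bound (t * R) R r hd0 htR hR1 hR0 hrR hr1
  have hvb := convex_bound (t * R) R r hd0 htR hR1 hR0 hrR hr1
  have hexp1 : Real.log ((1 - t * R ^ 2) / ((1 - t) * R)) / Real.log (1 / R)
      = (Real.log (R - t * R) - Real.log (1 - t * R * R)) / Real.log R := by
    rw [hlogR, Real.log_div hp1.ne' hp2.ne',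
      show R - t * R = (1 - t) * R by ring, show 1 - t * R * R = 1 - t * R ^ 2 by ring,
      div_neg, ← neg_div, neg_sub]
  have hexp2 : Real.log ((1 + t * R ^ 2) / ((1 + t) * R)) / Real.log (1 / R)
      = (Real.log (R + t * R) - Real.log (1 + t * R * R)) / Real.log R := by
    rw [hlogR, Real.log_div hp3.ne' hp4.ne',
      show R + t * R = (1 + t) * R by ring, show 1 + t * R * R = 1 + t * R ^ 2 by ring,
      div_neg, ← neg_div, neg_sub]
  constructor
  · rw [hexp1]
    calc r ^ ((Real.log (R - t * R) - Real.log (1 - t * R * R)) / Real.log R)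
        ≤ (r - t * R) / (1 - t * R * r) := hcb
      _ ≤ (r - s0) / (1 - r * s0) := low2
      _ ≤ pRho y w := hlow
  · rw [hexp2]
    calc pRho y w
        ≤ (r + s0) / (1 + r * s0) := hupp
      _ ≤ (r + t * R) / (1 + t * R * r) := upp2
      _ ≤ r ^ ((Real.log (R + t * R) - Real.log (1 + t * R * R)) / Real.log R) := hvb
end

section
/- Let δ ∈ (0,1] and c ∈ (0,1) with c < δ ≤ 1. If a sequence ζ in 𝔻 has interpolation characteristic δ(ζ) ≥ c, λ ∈ (0,1) satisfies 2λ/(1+λ²) < c, and each point of a sequence ω = {w_n} satisfies ρ(w_n, z_n) ≤ λ where ζ = {z_n}, then the interpolation characteristic of ω satisfies δ(ω) ≥ (c − 2λ/(1+λ²))/(1 − 2cλ/(1+λ²)). -/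
open Metric

notation "cabs" => (norm : ℂ → ℝ)

/-- The interpolation characteristic `δ(ζ) = inf_k ∏_{j≠k} ρ(z_j, z_k)` of a sequence. -/
noncomputable def charSeq {ι : Type*} (z : ι → ℂ) : ℝ :=
  ⨅ k : ι, ∏' j : {j : ι // j ≠ k}, pRho (z j) (z k)

lemma normSq_identity (z w : ℂ) :
    Complex.normSq (1 - (starRingEnd ℂ) w * z) - Complex.normSq (z - w)
      = (1 - Complex.normSq z) * (1 - Complex.normSq w) := by
  simp only [Complex.normSq_apply, Complex.sub_re, Complex.sub_im, Complex.mul_re, Complex.mul_im,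
    Complex.one_re, Complex.one_im, Complex.conj_re, Complex.conj_im]
  ring

lemma normSq_lt_one {z : ℂ} (hz : cabs z < 1) : Complex.normSq z < 1 := by
  rw [← Complex.sq_norm]
  nlinarith [norm_nonneg z]

lemma abs_sub_lt_abs_denom {z w : ℂ} (hz : cabs z < 1) (hw : cabs w < 1) :
    cabs (z - w) < cabs (1 - (starRingEnd ℂ) w * z) := by
  have hz' := normSq_lt_one hz
  have hw' := normSq_lt_one hw
  have key : Complex.normSq (z - w) < Complex.normSq (1 - (starRingEnd ℂ) w * z) := by
    nlinarith [normSq_identity z w]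
  calc cabs (z - w) = Real.sqrt (Complex.normSq (z - w)) := by rw [Complex.norm_def]
    _ < Real.sqrt (Complex.normSq (1 - (starRingEnd ℂ) w * z)) :=
        Real.sqrt_lt_sqrt (Complex.normSq_nonneg _) key
    _ = _ := by rw [Complex.norm_def]

lemma denom_ne {z w : ℂ} (hz : cabs z < 1) (hw : cabs w < 1) :
    (1 - (starRingEnd ℂ) w * z) ≠ 0 := by
  intro h
  have h2 := abs_sub_lt_abs_denom hz hw
  rw [h] at h2
  simp at h2
  exact absurd h2 (norm_nonneg _).not_gt

lemma pRho_eq (z w : ℂ) : pRho z w = cabs (z - w) / cabs (1 - (starRingEnd ℂ) w * z) := by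
  rw [pRho, norm_div]

lemma pRho_nonneg (z w : ℂ) : 0 ≤ pRho z w := norm_nonneg _

lemma pRho_lt_one_s5 {z w : ℂ} (hz : cabs z < 1) (hw : cabs w < 1) :
    pRho z w < 1 := by
  rw [pRho_eq]
  have h2 := abs_sub_lt_abs_denom hz hw
  have hpos : 0 < cabs (1 - (starRingEnd ℂ) w * z) :=
    lt_of_le_of_lt (norm_nonneg _) h2
  exact (div_lt_one hpos).2 h2

lemma pRho_symm (z w : ℂ) : pRho z w = pRho w z := by
  rw [pRho_eq, pRho_eq, ← Complex.norm_conj (1 - (starRingEnd ℂ) z * w)]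
  simp only [map_sub, map_one, map_mul, Complex.conj_conj]
  rw [norm_sub_rev, mul_comm]

noncomputable def mb (a z : ℂ) : ℂ := (z - a) / (1 - (starRingEnd ℂ) a * z)

lemma abs_mb (a z : ℂ) : cabs (mb a z) = pRho z a := rfl

lemma mb_invariance {a u v : ℂ} (ha : cabs a < 1) (hu : cabs u < 1)
    (hv : cabs v < 1) : pRho (mb a u) (mb a v) = pRho u v := by
  have hmu : cabs (mb a u) < 1 := (abs_mb a u) ▸ pRho_lt_one_s5 hu ha
  have hmv : cabs (mb a v) < 1 := (abs_mb a v) ▸ pRho_lt_one_s5 hv ha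
  have d1 : (1 - (starRingEnd ℂ) a * u) ≠ 0 := denom_ne hu ha
  have d2 : (1 - (starRingEnd ℂ) a * v) ≠ 0 := denom_ne hv ha
  have d3 : (1 - a * (starRingEnd ℂ) v) ≠ 0 := by
    intro h
    apply d2
    have h2 := congrArg (starRingEnd ℂ) h
    simpa [map_sub, map_mul, Complex.conj_conj] using h2
  have d4 : (1 - (starRingEnd ℂ) v * u) ≠ 0 := denom_ne hu hv
  have d6 : (1 - (starRingEnd ℂ) a * a) ≠ 0 := denom_ne ha ha
  have hC : (starRingEnd ℂ) (mb a v) =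
      ((starRingEnd ℂ) v - (starRingEnd ℂ) a) / (1 - a * (starRingEnd ℂ) v) := by
    rw [mb, map_div₀]
    simp [map_sub, map_mul, Complex.conj_conj]
  have hX : mb a u - mb a v
      = (u - v) * (1 - (starRingEnd ℂ) a * a) / ((1 - (starRingEnd ℂ) a * u) * (1 - (starRingEnd ℂ) a * v)) := by
    rw [mb, mb, div_sub_div _ _ d1 d2]
    congr 1
    ring
  have hY : 1 - (starRingEnd ℂ) (mb a v) * mb a u
      = (1 - (starRingEnd ℂ) v * u) * (1 - (starRingEnd ℂ) a * a) / ((1 - a * (starRingEnd ℂ) v) * (1 - (starRingEnd ℂ) a * u)) := by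
    rw [hC, mb, div_mul_div_comm, one_sub_div (mul_ne_zero d3 d1)]
    congr 1
    ring
  have key : (mb a u - mb a v) / (1 - (starRingEnd ℂ) (mb a v) * mb a u)
      = ((u - v) / (1 - (starRingEnd ℂ) v * u)) *
        ((1 - a * (starRingEnd ℂ) v) / (1 - (starRingEnd ℂ) a * v)) := by
    rw [hX, hY, div_div_div_eq, div_mul_div_comm,
      div_eq_div_iff (mul_ne_zero (mul_ne_zero d1 d2) (mul_ne_zero d4 d6)) (mul_ne_zero d4 d2)]
    ring
  rw [pRho, key, norm_mul, norm_div, norm_div]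
  have habs : cabs (1 - a * (starRingEnd ℂ) v) = cabs (1 - (starRingEnd ℂ) a * v) := by
    rw [← Complex.norm_conj (1 - (starRingEnd ℂ) a * v)]
    simp [map_sub, map_mul, Complex.conj_conj]
  rw [habs, div_self ((norm_ne_zero_iff.mpr d2)), mul_one, pRho, norm_div]

lemma pRho_origin {p q : ℂ} (hp : cabs p < 1) (hq : cabs q < 1) :
    pRho p q * (1 + cabs p * cabs q) ≤ cabs p + cabs q := by
  set a := cabs p with ha
  set b := cabs q with hb
  have ha0 : 0 ≤ a := norm_nonneg p
  have hb0 : 0 ≤ b := norm_nonneg q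
  have hD : 0 < cabs (1 - (starRingEnd ℂ) q * p) :=
    lt_of_le_of_lt (norm_nonneg _) (abs_sub_lt_abs_denom hp hq)
  rw [pRho_eq, div_mul_eq_mul_div, div_le_iff₀ hD]
  set D := cabs (1 - (starRingEnd ℂ) q * p) with hDdef
  set X := cabs (p - q) * (1 + a * b) with hX
  have hX0 : 0 ≤ X := by positivity
  have hY0 : 0 ≤ (a + b) * D := by positivity
  have ht : Complex.normSq ((starRingEnd ℂ) q * p) = (a*b)^2 := by
    rw [← Complex.sq_norm, norm_mul, Complex.norm_conj]
    ring
  have htre : -(a*b) ≤ ((starRingEnd ℂ) q * p).re := by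
    have h1 : |((starRingEnd ℂ) q * p).re| ≤ cabs ((starRingEnd ℂ) q * p) :=
      Complex.abs_re_le_norm _
    have h2 : cabs ((starRingEnd ℂ) q * p) = a * b := by
      rw [norm_mul, Complex.norm_conj]; ring
    rw [h2] at h1
    linarith [neg_abs_le (((starRingEnd ℂ) q * p).re)]
  have hsq : X ^ 2 ≤ ((a + b) * D) ^ 2 := by
    have e1 : cabs (p - q) ^ 2 = Complex.normSq (p - q) := Complex.sq_norm _
    have e2 : D ^ 2 = Complex.normSq (1 - (starRingEnd ℂ) q * p) := by
      rw [hDdef]; exact Complex.sq_norm _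
    have e3 : Complex.normSq (p - q) = a^2 + b^2 - 2 * ((starRingEnd ℂ) q * p).re := by
      simp only [Complex.normSq_sub]
      rw [← Complex.sq_norm p, ← Complex.sq_norm q]
      have : (p * (starRingEnd ℂ) q).re = ((starRingEnd ℂ) q * p).re := by rw [mul_comm]
      rw [this]
    have e4 : Complex.normSq (1 - (starRingEnd ℂ) q * p)
        = 1 + (a*b)^2 - 2 * ((starRingEnd ℂ) q * p).re := by
      simp only [Complex.normSq_sub, Complex.normSq_one, ht]
      simp [Complex.one_re, Complex.one_im, Complex.mul_re, Complex.mul_im]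
    rw [hX, mul_pow, e1, e3]
    calc (a^2 + b^2 - 2 * ((starRingEnd ℂ) q * p).re) * (1 + a*b)^2
        ≤ (a+b)^2 * (1 + (a*b)^2 - 2 * ((starRingEnd ℂ) q * p).re) := by
          nlinarith [mul_nonneg (mul_nonneg (by linarith : (0:ℝ) ≤ ((starRingEnd ℂ) q * p).re + a*b)
            (by nlinarith : (0:ℝ) ≤ 1 - a^2)) (by nlinarith : (0:ℝ) ≤ 1 - b^2)]
      _ = ((a+b) * D)^2 := by
          rw [show ((a+b) * D)^2 = (a+b)^2 * D^2 from by ring, e2, e4]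
  calc X = Real.sqrt (X ^ 2) := (Real.sqrt_sq hX0).symm
    _ ≤ Real.sqrt (((a + b) * D) ^ 2) := Real.sqrt_le_sqrt hsq
    _ = (a + b) * D := Real.sqrt_sq hY0

lemma pRho_triangle_s5 {u v w : ℂ} (hu : cabs u < 1) (hv : cabs v < 1)
    (hw : cabs w < 1) :
    pRho u w * (1 + pRho u v * pRho v w) ≤ pRho u v + pRho v w := by
  have hp : cabs (mb v u) < 1 := (abs_mb v u) ▸ pRho_lt_one_s5 hu hv
  have hq : cabs (mb v w) < 1 := (abs_mb v w) ▸ pRho_lt_one_s5 hw hv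
  have h1 : pRho u w = pRho (mb v u) (mb v w) := (mb_invariance hv hu hw).symm
  have h2 : pRho u v = cabs (mb v u) := (abs_mb v u).symm
  have h3 : pRho v w = cabs (mb v w) := by rw [pRho_symm]; exact (abs_mb v w).symm
  rw [h1, h2, h3]
  exact pRho_origin hp hq

lemma pair_bound {zj zk wj wk : ℂ} (hzj : cabs zj < 1) (hzk : cabs zk < 1)
    (hwj : cabs wj < 1) (hwk : cabs wk < 1) {lam : ℝ}
    (hl0 : 0 < lam) (hl1 : lam < 1)
    (hj : pRho wj zj ≤ lam) (hk : pRho wk zk ≤ lam) :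
    pRho zj zk * (1 + lam^2) - 2*lam ≤ pRho wj wk * ((1 + lam^2) - 2*lam*pRho zj zk) := by
  set A := pRho zj zk
  set y := pRho wj zk
  set b := pRho wj wk
  set s := pRho zj wj with hs
  set t := pRho wk zk
  have T1 : A * (1 + s * y) ≤ s + y := pRho_triangle_s5 hzj hwj hzk
  have T2 : y * (1 + b * t) ≤ b + t := pRho_triangle_s5 hwj hwk hzk
  have hsl : s ≤ lam := by rw [hs, pRho_symm]; exact hj
  have hA0 : 0 ≤ A := pRho_nonneg _ _
  have hA1 : A < 1 := pRho_lt_one_s5 hzj hzk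
  have hy0 : 0 ≤ y := pRho_nonneg _ _
  have hy1 : y < 1 := pRho_lt_one_s5 hwj hzk
  have hb0 : 0 ≤ b := pRho_nonneg _ _
  have hb1 : b < 1 := pRho_lt_one_s5 hwj hwk
  have hs0 : 0 ≤ s := pRho_nonneg _ _
  have ht0 : 0 ≤ t := pRho_nonneg _ _
  have h1' : A * (1 + lam * y) ≤ lam + y := by
    nlinarith [mul_nonneg (sub_nonneg.2 hsl) (sub_nonneg.2 hy1.le),
      mul_nonneg (mul_nonneg (sub_nonneg.2 hA1.le) hy0) (sub_nonneg.2 hsl)]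
  have h2' : y * (1 + lam * b) ≤ lam + b := by
    nlinarith [mul_nonneg (sub_nonneg.2 hk) (sub_nonneg.2 hb1.le),
      mul_nonneg (mul_nonneg (sub_nonneg.2 hy1.le) hb0) (sub_nonneg.2 hk)]
  have g1 : A - lam ≤ y * (1 - lam * A) := by nlinarith [h1']
  have g2 : y - lam ≤ b * (1 - lam * y) := by nlinarith [h2']
  have hden : 0 < 1 - lam * A := by nlinarith
  nlinarith [mul_le_mul_of_nonneg_right g2 hden.le,
    mul_nonneg (mul_nonneg hb0 hl0.le) (sub_nonneg.2 g1)]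

lemma psi_nonneg {r x : ℝ} (hr0 : 0 ≤ r) (hrx : r ≤ x) (hx1 : x ≤ 1) (hr1 : r < 1) :
    0 ≤ (x - r) / (1 - r * x) :=
  div_nonneg (by linarith) (by nlinarith)

lemma psi_mono {r x y : ℝ} (hr0 : 0 ≤ r) (hr1 : r < 1) (hxy : x ≤ y) (hy1 : y ≤ 1) (hx0 : 0 ≤ x) :
    (x - r) / (1 - r * x) ≤ (y - r) / (1 - r * y) := by
  rw [div_le_div_iff₀ (by nlinarith) (by nlinarith)]
  nlinarith [mul_nonneg (sub_nonneg.2 hxy) (by nlinarith : (0:ℝ) ≤ 1 - r^2)]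

lemma psi_submul {r a b : ℝ} (hr0 : 0 ≤ r) (hr1 : r < 1) (ha0 : 0 ≤ a) (ha1 : a ≤ 1)
    (hb0 : 0 ≤ b) (hb1 : b ≤ 1) :
    (a * b - r) / (1 - r * (a * b)) ≤ (a - r) / (1 - r * a) * ((b - r) / (1 - r * b)) := by
  have hab1 : a * b ≤ 1 := mul_le_one₀ ha1 hb0 hb1
  have h1 : (0:ℝ) < 1 - r * (a * b) := by nlinarith [mul_nonneg hr0 (sub_nonneg.2 hab1)]
  have h2 : (0:ℝ) < 1 - r * a := by nlinarith [mul_nonneg hr0 (sub_nonneg.2 ha1)]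
  have h3 : (0:ℝ) < 1 - r * b := by nlinarith [mul_nonneg hr0 (sub_nonneg.2 hb1)]
  rw [div_mul_div_comm, div_le_div_iff₀ h1 (mul_pos h2 h3)]
  nlinarith [mul_nonneg (mul_nonneg (mul_nonneg (mul_nonneg hr0 (by linarith : (0:ℝ) ≤ 1 + r))
    (by nlinarith : (0:ℝ) ≤ 1 - a * b)) (by linarith : (0:ℝ) ≤ 1 - a))
    (by linarith : (0:ℝ) ≤ 1 - b)]

lemma psi_prod {ι : Type*} (F : Finset ι) (a : ι → ℝ) {r : ℝ} (hr0 : 0 ≤ r) (hr1 : r < 1)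
    (ha : ∀ j ∈ F, r ≤ a j ∧ a j ≤ 1) :
    ((∏ j ∈ F, a j) - r) / (1 - r * ∏ j ∈ F, a j) ≤ ∏ j ∈ F, (a j - r) / (1 - r * a j) := by
  classical
  induction F using Finset.cons_induction with
  | empty => simp [div_self (by linarith : (1:ℝ) - r ≠ 0)]
  | cons i F hi ih =>
    rw [Finset.prod_cons, Finset.prod_cons]
    have hai := ha i (Finset.mem_cons_self i F)
    have haF : ∀ j ∈ F, r ≤ a j ∧ a j ≤ 1 := fun j hj => ha j (Finset.mem_cons_of_mem hj)
    have hP0 : 0 ≤ ∏ j ∈ F, a j := Finset.prod_nonneg fun j hj => le_trans hr0 (haF j hj).1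
    have hP1 : ∏ j ∈ F, a j ≤ 1 := Finset.prod_le_one (fun j hj => le_trans hr0 (haF j hj).1)
      (fun j hj => (haF j hj).2)
    calc ((a i * ∏ j ∈ F, a j) - r) / (1 - r * (a i * ∏ j ∈ F, a j))
        ≤ (a i - r) / (1 - r * a i) * (((∏ j ∈ F, a j) - r) / (1 - r * ∏ j ∈ F, a j)) :=
          psi_submul hr0 hr1 (le_trans hr0 hai.1) hai.2 hP0 hP1
      _ ≤ (a i - r) / (1 - r * a i) * ∏ j ∈ F, (a j - r) / (1 - r * a j) :=
          mul_le_mul_of_nonneg_left (ih haF) (psi_nonneg hr0 hai.1 hai.2 hr1)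

lemma hasProd_aux {ι : Type*} (f : ι → ℝ) (h0 : ∀ i, 0 ≤ f i) (h1 : ∀ i, f i ≤ 1) :
    HasProd f (⨅ F : Finset ι, ∏ i ∈ F, f i) := by
  classical
  have anti : Antitone (fun F : Finset ι => ∏ i ∈ F, f i) := by
    intro F F' h
    simp only
    rw [← Finset.prod_sdiff h]
    exact mul_le_of_le_one_left (Finset.prod_nonneg fun i _ => h0 i)
      (Finset.prod_le_one (fun i _ => h0 i) (fun i _ => h1 i))
  have bdd : BddBelow (Set.range fun F : Finset ι => ∏ i ∈ F, f i) := by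
    refine ⟨0, ?_⟩
    rintro x ⟨F, rfl⟩
    exact Finset.prod_nonneg fun i _ => h0 i
  exact tendsto_atTop_ciInf anti bdd


/-- Stability of the interpolation characteristic under pseudohyperbolic perturbation:
if `δ(ζ) ≥ c`, `2λ/(1+λ²) < c` and `ρ(w_n,z_n) ≤ λ` for all `n`, then
`δ(ω) ≥ (c − 2λ/(1+λ²))/(1 − 2cλ/(1+λ²))`. -/
theorem charSeq_perturbation (ζ ω : ℕ → ℂ)
    (hζ : ∀ n, ζ n ∈ ball (0 : ℂ) 1) (hω : ∀ n, ω n ∈ ball (0 : ℂ) 1)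
    (δ c : ℝ) (hδ : δ ∈ Set.Ioc (0:ℝ) 1) (hc : c ∈ Set.Ioo (0:ℝ) 1) (hcδ : c < δ)
    (hchar : c ≤ charSeq ζ)
    (lam : ℝ) (hlam : lam ∈ Set.Ioo (0:ℝ) 1) (hlamc : 2 * lam / (1 + lam ^ 2) < c)
    (hperturb : ∀ n, pRho (ω n) (ζ n) ≤ lam) :
    (c - 2 * lam / (1 + lam ^ 2)) / (1 - 2 * c * lam / (1 + lam ^ 2)) ≤ charSeq ω := by
  classical
  obtain ⟨hc0, hc1⟩ := hc
  obtain ⟨hl0, hl1⟩ := hlam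
  have hζ' : ∀ n, cabs (ζ n) < 1 := by
    intro n
    have := hζ n
    rwa [mem_ball_zero_iff] at this
  have hω' : ∀ n, cabs (ω n) < 1 := by
    intro n
    have := hω n
    rwa [mem_ball_zero_iff] at this
  have h1l : (0:ℝ) < 1 + lam ^ 2 := by positivity
  set r : ℝ := 2 * lam / (1 + lam ^ 2) with hrdef
  have hr0 : 0 ≤ r := by positivity
  have hrc : r < c := hlamc
  have hr1 : r < 1 := lt_trans hrc hc1
  have hr_eq : r * (1 + lam ^ 2) = 2 * lam := by
    rw [hrdef]; field_simp
  have hgoal_eq : (c - 2 * lam / (1 + lam ^ 2)) / (1 - 2 * c * lam / (1 + lam ^ 2))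
      = (c - r) / (1 - r * c) := by
    have h2 : 2 * c * lam / (1 + lam ^ 2) = r * c := by rw [hrdef]; ring
    rw [h2, hrdef]
  rw [hgoal_eq]
  -- sequences for a fixed k
  have key : ∀ k : ℕ, (c - r) / (1 - r * c) ≤ ∏' j : {j : ℕ // j ≠ k}, pRho (ω j) (ω k) := by
    intro k
    set aj : {j : ℕ // j ≠ k} → ℝ := fun j => pRho (ζ j) (ζ k) with haj
    set bj : {j : ℕ // j ≠ k} → ℝ := fun j => pRho (ω j) (ω k) with hbj
    have ha0 : ∀ j, 0 ≤ aj j := fun j => pRho_nonneg _ _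
    have ha1 : ∀ j, aj j ≤ 1 := fun j => (pRho_lt_one_s5 (hζ' j) (hζ' k)).le
    have hb0 : ∀ j, 0 ≤ bj j := fun j => pRho_nonneg _ _
    have hb1 : ∀ j, bj j ≤ 1 := fun j => (pRho_lt_one_s5 (hω' j) (hω' k)).le
    have hpa := hasProd_aux aj ha0 ha1
    have hpb := hasProd_aux bj hb0 hb1
    have hta : (∏' j, aj j) = ⨅ F : Finset {j : ℕ // j ≠ k}, ∏ i ∈ F, aj i := hpa.tprod_eq
    have htb : (∏' j, bj j) = ⨅ F : Finset {j : ℕ // j ≠ k}, ∏ i ∈ F, bj i := hpb.tprod_eq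
    have hbddA : BddBelow (Set.range fun F : Finset {j : ℕ // j ≠ k} => ∏ i ∈ F, aj i) := by
      refine ⟨0, ?_⟩
      rintro x ⟨F, rfl⟩
      exact Finset.prod_nonneg fun i _ => ha0 i
    -- c ≤ tprod aj
    have hcharA : c ≤ ∏' j, aj j := by
      refine le_trans hchar ?_
      have hbdd : BddBelow (Set.range fun k : ℕ => ∏' j : {j : ℕ // j ≠ k}, pRho (ζ j) (ζ k)) := by
        refine ⟨0, ?_⟩
        rintro x ⟨m, rfl⟩
        have h := (hasProd_aux (fun j : {j : ℕ // j ≠ m} => pRho (ζ j) (ζ m))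
          (fun j => pRho_nonneg _ _) (fun j => (pRho_lt_one_s5 (hζ' j) (hζ' m)).le)).tprod_eq
        dsimp only
        rw [h]
        exact le_ciInf fun F => Finset.prod_nonneg fun i _ => pRho_nonneg _ _
      exact ciInf_le hbdd k
    -- partial products of aj are ≥ c
    have hprodA : ∀ F : Finset {j : ℕ // j ≠ k}, c ≤ ∏ i ∈ F, aj i := by
      intro F
      refine le_trans hcharA ?_
      rw [hta]
      exact ciInf_le hbddA F
    -- each aj ≥ c
    have hac : ∀ j, c ≤ aj j := by
      intro j
      have := hprodA {j}
      simpa using this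
    -- per-pair bound
    have hpair : ∀ j : {j : ℕ // j ≠ k}, (aj j - r) / (1 - r * aj j) ≤ bj j := by
      intro j
      have hden : (0:ℝ) < 1 - r * aj j := by nlinarith [hac j, ha1 j]
      rw [div_le_iff₀ hden]
      have H := pair_bound (hζ' j) (hζ' k) (hω' j) (hω' k) hl0 hl1 (hperturb j) (hperturb k)
      have e1 : (aj j - r) * (1 + lam ^ 2) = aj j * (1 + lam ^ 2) - 2 * lam := by
        linear_combination (-1 : ℝ) * hr_eq
      have e2 : bj j * (1 - r * aj j) * (1 + lam ^ 2)
          = bj j * ((1 + lam ^ 2) - 2 * lam * aj j) := by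
        linear_combination (-(bj j * aj j)) * hr_eq
      have : (aj j - r) * (1 + lam ^ 2) ≤ bj j * (1 - r * aj j) * (1 + lam ^ 2) := by
        rw [e1, e2]; exact H
      exact le_of_mul_le_mul_right this h1l
    -- finish
    rw [htb]
    refine le_ciInf fun F => ?_
    have step1 : (c - r) / (1 - r * c) ≤ ((∏ i ∈ F, aj i) - r) / (1 - r * ∏ i ∈ F, aj i) :=
      psi_mono hr0 hr1 (hprodA F)
        (Finset.prod_le_one (fun i _ => ha0 i) (fun i _ => ha1 i)) hc0.le
    have step2 : ((∏ i ∈ F, aj i) - r) / (1 - r * ∏ i ∈ F, aj i)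
        ≤ ∏ i ∈ F, (aj i - r) / (1 - r * aj i) :=
      psi_prod F aj hr0 hr1 fun j _ => ⟨le_trans hrc.le (hac j), ha1 j⟩
    have step3 : (∏ i ∈ F, (aj i - r) / (1 - r * aj i)) ≤ ∏ i ∈ F, bj i :=
      Finset.prod_le_prod (fun i _ => psi_nonneg hr0 (le_trans hrc.le (hac i)) (ha1 i) hr1)
        (fun i _ => hpair i)
    linarith
  -- conclude
  rw [charSeq]
  exact le_ciInf key
end

section
/- Define a(r) = [ln((1−tR²)/((1−t)R))/ln(1/R)]·[ln((4−ε²)/(3ε))/ln(1/ε)] and similarly b(r) as products of the two exponents b₁ b₂ in the paper with R = 3ε/4, t = 1/3 and R = ε, t = 1/4, where r = ε/4. Then a(r) ∈ (1,2), b(r) ∈ (0,1), and a(r) − 1 = O(1/ln(1/r)) and 1 − b(r) = O(1/ln(1/r)) as r → 0⁺. -/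
set_option maxHeartbeats 1600000


/-- The exponents `a = a₁a₂` and `b = b₁b₂` of the paper, with
`a₁ = ln((16−3ε²)/(8ε))/ln(4/(3ε))`, `b₁ = ln((16+3ε²)/(16ε))/ln(4/(3ε))`,
`a₂ = ln((4−ε²)/(3ε))/ln(1/ε)`, `b₂ = ln((4+ε²)/(5ε))/ln(1/ε)`, `r = ε/4`, satisfy
`a ∈ (1,2)`, `b ∈ (0,1)` and `a − 1 = O(1/ln(1/r))`, `1 − b = O(1/ln(1/r))` as `r → 0⁺`. -/
theorem exponent_asymptotics :
    ∃ C > (0:ℝ), ∃ ε₀ ∈ Set.Ioo (0:ℝ) 1, ∀ ε ∈ Set.Ioo (0:ℝ) ε₀,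
      (Real.log ((16 - 3 * ε ^ 2) / (8 * ε)) / Real.log (4 / (3 * ε))) *
          (Real.log ((4 - ε ^ 2) / (3 * ε)) / Real.log (1 / ε)) ∈ Set.Ioo (1:ℝ) 2 ∧
      (Real.log ((16 + 3 * ε ^ 2) / (16 * ε)) / Real.log (4 / (3 * ε))) *
          (Real.log ((4 + ε ^ 2) / (5 * ε)) / Real.log (1 / ε)) ∈ Set.Ioo (0:ℝ) 1 ∧
      (Real.log ((16 - 3 * ε ^ 2) / (8 * ε)) / Real.log (4 / (3 * ε))) *
          (Real.log ((4 - ε ^ 2) / (3 * ε)) / Real.log (1 / ε)) - 1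
        ≤ C / Real.log (1 / (ε / 4)) ∧
      1 - (Real.log ((16 + 3 * ε ^ 2) / (16 * ε)) / Real.log (4 / (3 * ε))) *
          (Real.log ((4 + ε ^ 2) / (5 * ε)) / Real.log (1 / ε))
        ≤ C / Real.log (1 / (ε / 4)) := by
  refine ⟨10, by norm_num, Real.exp (-4),
    ⟨Real.exp_pos _, by rw [Real.exp_lt_one_iff]; norm_num⟩, ?_⟩
  rintro ε ⟨hε, hε'⟩
  have hε1 : ε < 1 := lt_trans hε' (by rw [Real.exp_lt_one_iff]; norm_num)
  have hε2 : ε ^ 2 < 1 := by nlinarith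
  set L : ℝ := Real.log (1 / ε) with hLdef
  set D : ℝ := Real.log (4 / (3 * ε)) with hDdef
  set A1 : ℝ := Real.log ((16 - 3 * ε ^ 2) / (8 * ε)) with hA1def
  set A2 : ℝ := Real.log ((4 - ε ^ 2) / (3 * ε)) with hA2def
  set B1 : ℝ := Real.log ((16 + 3 * ε ^ 2) / (16 * ε)) with hB1def
  set B2 : ℝ := Real.log ((4 + ε ^ 2) / (5 * ε)) with hB2def
  -- L > 4
  have hL4 : 4 < L := by
    have h1 : Real.log ε < -4 := by
      have := Real.log_lt_log hε hε'
      rwa [Real.log_exp] at this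
    have h2 : L = -Real.log ε := by rw [hLdef, one_div, Real.log_inv]
    linarith
  have hLpos : 0 < L := by linarith
  -- L ≤ D
  have hLD : L ≤ D := by
    apply Real.log_le_log (by positivity)
    rw [div_le_div_iff₀ hε (by positivity)]
    nlinarith
  have hDpos : 0 < D := lt_of_lt_of_le hLpos hLD
  -- D < A1
  have hDA1 : D < A1 := by
    apply Real.log_lt_log (by positivity)
    rw [div_lt_div_iff₀ (by positivity) (by positivity)]
    nlinarith
  -- L < A2
  have hLA2 : L < A2 := by
    apply Real.log_lt_log (by positivity)
    rw [div_lt_div_iff₀ hε (by positivity)]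
    nlinarith
  -- A1 ≤ log 2 + L
  have hA1ub : A1 ≤ Real.log 2 + L := by
    have h : A1 ≤ Real.log (2 * (1 / ε)) := by
      apply Real.log_le_log (by apply div_pos (by nlinarith) (by positivity))
      rw [mul_one_div, div_le_div_iff₀ (by positivity) hε]
      nlinarith
    rwa [Real.log_mul (by norm_num) (by positivity)] at h
  -- A2 ≤ log 4 + L
  have hA2ub : A2 ≤ Real.log 4 + L := by
    have h : A2 ≤ Real.log (4 * (1 / ε)) := by
      apply Real.log_le_log (by apply div_pos (by nlinarith) (by positivity))
      rw [mul_one_div, div_le_div_iff₀ (by positivity) hε]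
      nlinarith
    rwa [Real.log_mul (by norm_num) (by positivity)] at h
  -- 0 < B1 < D, D ≤ log (4/3) + B1
  have hB1pos : 0 < B1 := by
    apply Real.log_pos
    rw [lt_div_iff₀ (by positivity)]
    nlinarith
  have hB1D : B1 < D := by
    apply Real.log_lt_log (by positivity)
    rw [div_lt_div_iff₀ (by positivity) (by positivity)]
    nlinarith
  have hDB1 : D ≤ Real.log (4 / 3) + B1 := by
    have h : D ≤ Real.log ((4 / 3) * ((16 + 3 * ε ^ 2) / (16 * ε))) := by
      apply Real.log_le_log (by positivity)
      rw [div_mul_div_comm, div_le_div_iff₀ (by positivity) (by positivity)]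
      nlinarith
    rwa [Real.log_mul (by norm_num) (by positivity)] at h
  -- 0 < B2 < L, L ≤ log (5/4) + B2
  have hB2pos : 0 < B2 := by
    apply Real.log_pos
    rw [lt_div_iff₀ (by positivity)]
    nlinarith
  have hB2L : B2 < L := by
    apply Real.log_lt_log (by positivity)
    rw [div_lt_div_iff₀ (by positivity) hε]
    nlinarith
  have hLB2 : L ≤ Real.log (5 / 4) + B2 := by
    have h : L ≤ Real.log ((5 / 4) * ((4 + ε ^ 2) / (5 * ε))) := by
      apply Real.log_le_log (by positivity)
      rw [div_mul_div_comm, div_le_div_iff₀ hε (by positivity)]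
      nlinarith
    rwa [Real.log_mul (by norm_num) (by positivity)] at h
  -- constant log bounds
  have hlog2pos : 0 < Real.log 2 := Real.log_pos (by norm_num)
  have hlog2ub : Real.log 2 ≤ 1 := by
    have := Real.log_le_sub_one_of_pos (x := 2) (by norm_num); linarith
  have hlog4 : Real.log 4 = 2 * Real.log 2 := by
    rw [show (4:ℝ) = 2 ^ 2 by norm_num, Real.log_pow]; push_cast; ring
  have hlog4pos : 0 < Real.log 4 := by linarith
  have hlog4ub : Real.log 4 ≤ 2 := by linarith
  have hlog43pos : 0 < Real.log (4 / 3) := Real.log_pos (by norm_num)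
  have hlog43ub : Real.log (4 / 3) ≤ 1 / 3 := by
    have := Real.log_le_sub_one_of_pos (x := 4 / 3) (by norm_num); linarith
  have hlog54pos : 0 < Real.log (5 / 4) := Real.log_pos (by norm_num)
  have hlog54ub : Real.log (5 / 4) ≤ 1 / 4 := by
    have := Real.log_le_sub_one_of_pos (x := 5 / 4) (by norm_num); linarith
  -- log (1/(ε/4)) = log 4 + L
  have hr : Real.log (1 / (ε / 4)) = Real.log 4 + L := by
    rw [show 1 / (ε / 4) = 4 * (1 / ε) by field_simp,
      Real.log_mul (by norm_num) (by positivity)]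
  have hrpos : 0 < Real.log 4 + L := by linarith
  -- the four component ratios
  have ha1 : 1 < A1 / D := (one_lt_div hDpos).2 hDA1
  have ha2 : 1 < A2 / L := (one_lt_div hLpos).2 hLA2
  have hb1lt : B1 / D < 1 := (div_lt_one hDpos).2 hB1D
  have hb2lt : B2 / L < 1 := (div_lt_one hLpos).2 hB2L
  have hb1pos : 0 < B1 / D := div_pos hB1pos hDpos
  have hb2pos : 0 < B2 / L := div_pos hB2pos hLpos
  -- upper bound for a
  have haub : A1 / D * (A2 / L) ≤ 1 + 7 / (2 * L) := by
    have h1 : A1 / D * (A2 / L) ≤ (Real.log 2 + L) / L * ((Real.log 4 + L) / L) := by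
      apply mul_le_mul
      · exact div_le_div₀ (by linarith) hA1ub hLpos hLD
      · exact div_le_div₀ (by linarith) hA2ub hLpos le_rfl
      · positivity
      · positivity
    have h2 : (Real.log 2 + L) / L * ((Real.log 4 + L) / L) ≤ 1 + 7 / (2 * L) := by
      rw [div_mul_div_comm, div_le_iff₀ (by positivity)]
      have hexp : (1 + 7 / (2 * L)) * (L * L) = L * L + 7 / 2 * L := by field_simp
      rw [hexp]
      nlinarith
    linarith
  -- upper bound for 1 - b
  have hbub : 1 - B1 / D * (B2 / L) ≤ 1 / L := by
    have h1 : 1 - B1 / D ≤ Real.log (4 / 3) / L := by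
      have : 1 - B1 / D = (D - B1) / D := by field_simp
      rw [this]
      exact div_le_div₀ (by linarith) (by linarith) hLpos hLD
    have h2 : 1 - B2 / L ≤ Real.log (5 / 4) / L := by
      have : 1 - B2 / L = (L - B2) / L := by field_simp
      rw [this]
      exact div_le_div₀ (by linarith) (by linarith) hLpos le_rfl
    have h3 : 1 - B1 / D * (B2 / L) ≤ (1 - B1 / D) + (1 - B2 / L) := by nlinarith
    have h4 : Real.log (4 / 3) / L + Real.log (5 / 4) / L ≤ 1 / L := by
      rw [← add_div, div_le_div_iff₀ hLpos hLpos]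
      nlinarith
    linarith
  have h7 : 7 / (2 * L) < 1 := by
    rw [div_lt_one (by positivity)]; linarith
  refine ⟨⟨by nlinarith, by linarith⟩, ⟨by positivity, by nlinarith⟩, ?_, ?_⟩
  · rw [hr]
    have h5 : 7 / (2 * L) ≤ 10 / (Real.log 4 + L) := by
      rw [div_le_div_iff₀ (by positivity) hrpos]
      nlinarith
    linarith
  · rw [hr]
    have h5 : 1 / L ≤ 10 / (Real.log 4 + L) := by
      rw [div_le_div_iff₀ hLpos hrpos]
      nlinarith
    linarith
end

section
/- Let g ∈ H^∞(𝔻ⁿ, X) for a complex Banach space X. Then the Gelfand-type extension ĝ of g to the maximal ideal space 𝔐(H^∞(𝔻ⁿ)) is weak-* continuous with values in the bidual X**, and for every open set W̃ ⊂ cl(𝔻ⁿ) with W = W̃ ∩ 𝔻ⁿ one has sup_{x∈W̃} ‖ĝ(x)‖_{X**} = ‖g‖_{H^∞(W,X)}; moreover if the image of g lies in a norm-compact subset of X, then ĝ takes values in X and is norm-continuous. -/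
open Metric BoundedContinuousFunction

set_option maxHeartbeats 2000000
set_option synthInstance.maxHeartbeats 1000000

noncomputable section

/-- The open unit polydisk in `ℂⁿ`. -/
def polydisk (n : ℕ) : Set (Fin n → ℂ) := {z | ∀ i, ‖z i‖ < 1}

/-- Extension by zero of a function on the polydisk to all of `ℂⁿ`. -/
def extFun {n : ℕ} (f : ↥(polydisk n) → ℂ) : (Fin n → ℂ) → ℂ :=
  fun z => @dite _ (z ∈ polydisk n) (Classical.propDecidable _) (fun h => f ⟨z, h⟩) fun _ => 0

theorem extFun_eq {n : ℕ} (f : ↥(polydisk n) → ℂ) {z : Fin n → ℂ} (hz : z ∈ polydisk n) :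
    extFun f z = f ⟨z, hz⟩ := dif_pos hz

/-- The algebra `H^∞(𝔻ⁿ)` of bounded holomorphic functions on the polydisk, realized as
the subalgebra of bounded continuous functions on the polydisk that are holomorphic. -/
def Hinf (n : ℕ) : Subalgebra ℂ (↥(polydisk n) →ᵇ ℂ) where
  carrier := {f | DifferentiableOn ℂ (extFun f) (polydisk n)}
  mul_mem' := by
    intro f g hf hg
    exact (hf.mul hg).congr fun z hz => by
      rw [extFun_eq _ hz, Pi.mul_apply, extFun_eq _ hz, extFun_eq _ hz]; rfl
  add_mem' := by
    intro f g hf hg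
    exact (hf.add hg).congr fun z hz => by
      rw [extFun_eq _ hz, Pi.add_apply, extFun_eq _ hz, extFun_eq _ hz]; rfl
  algebraMap_mem' := by
    intro c
    exact (differentiableOn_const c).congr fun z hz => by rw [extFun_eq _ hz]; rfl

/-- The evaluation functional of `H^∞(𝔻ⁿ)` at a point of the polydisk. -/
def evalChar {n : ℕ} (z : ↥(polydisk n)) : WeakDual ℂ ↥(Hinf n) :=
  { toFun := fun f => (f : ↥(polydisk n) →ᵇ ℂ) z
    map_add' := by intro f g; rfl
    map_smul' := by intro c f; rfl
    cont := (continuous_eval_const (x := z)).comp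
      continuous_subtype_val }

theorem evalChar_prop {n : ℕ} (z : ↥(polydisk n)) :
    evalChar z ≠ 0 ∧ ∀ f g : ↥(Hinf n), evalChar z (f * g) = evalChar z f * evalChar z g := by
  constructor
  · intro h0
    have h1 : evalChar z (1 : ↥(Hinf n)) = 0 := by rw [h0]; rfl
    have h2 : evalChar z (1 : ↥(Hinf n)) = 1 := rfl
    rw [h2] at h1
    exact one_ne_zero h1
  · intro f g; rfl

/-- The evaluation character, as a point of the maximal ideal space `𝔐(H^∞(𝔻ⁿ))`. -/
def evalCharacter {n : ℕ} (z : ↥(polydisk n)) : WeakDual.characterSpace ℂ ↥(Hinf n) :=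
  ⟨evalChar z, evalChar_prop z⟩

/-- `cl(𝔻ⁿ)`: the closure of the polydisk (as evaluation characters) in the maximal
ideal space of `H^∞(𝔻ⁿ)`. -/
def clPolydisk (n : ℕ) : Set (WeakDual.characterSpace ℂ ↥(Hinf n)) :=
  closure (Set.range (evalCharacter (n := n)))

/-- The point of `cl(𝔻ⁿ)` corresponding to a point of the polydisk. -/
def clPoint {n : ℕ} (z : ↥(polydisk n)) : ↥(clPolydisk n) :=
  ⟨evalCharacter z, subset_closure ⟨z, rfl⟩⟩

namespace GelfandAux

open NormedSpace

variable {n : ℕ} {X : Type} [NormedAddCommGroup X] [NormedSpace ℂ X]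

theorem zero_mem_polydisk (n : ℕ) : (0 : Fin n → ℂ) ∈ polydisk n := by
  simp [polydisk]

theorem M_nonneg (g : (Fin n → ℂ) → X) (M : ℝ) (hM : ∀ z ∈ polydisk n, ‖g z‖ ≤ M) : 0 ≤ M :=
  (norm_nonneg _).trans (hM 0 (zero_mem_polydisk n))

/-- `φ ∘ g` as an element of `H^∞`. -/
def Tbcf (g : (Fin n → ℂ) → X) (hg : DifferentiableOn ℂ g (polydisk n))
    (M : ℝ) (hM : ∀ z ∈ polydisk n, ‖g z‖ ≤ M) (φ : StrongDual ℂ X) : ↥(Hinf n) :=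
  ⟨BoundedContinuousFunction.ofNormedAddCommGroup (fun z : ↥(polydisk n) => φ (g ↑z))
      (φ.continuous.comp hg.continuousOn.restrict) (‖φ‖ * M)
      (fun z => (φ.le_opNorm _).trans
        (mul_le_mul_of_nonneg_left (hM _ z.2) (norm_nonneg φ))),
    (φ.differentiable.comp_differentiableOn hg).congr
      (fun z hz => by rw [extFun_eq _ hz]; rfl)⟩

theorem Tbcf_apply (g : (Fin n → ℂ) → X) (hg : DifferentiableOn ℂ g (polydisk n))
    (M : ℝ) (hM : ∀ z ∈ polydisk n, ‖g z‖ ≤ M) (φ : StrongDual ℂ X) (z : ↥(polydisk n)) :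
    (Tbcf g hg M hM φ : ↥(polydisk n) →ᵇ ℂ) z = φ (g ↑z) := rfl

theorem Tbcf_norm_le (g : (Fin n → ℂ) → X) (hg : DifferentiableOn ℂ g (polydisk n))
    (M : ℝ) (hM : ∀ z ∈ polydisk n, ‖g z‖ ≤ M) (φ : StrongDual ℂ X) :
    ‖Tbcf g hg M hM φ‖ ≤ M * ‖φ‖ := by
  have h : ‖Tbcf g hg M hM φ‖ = ‖(Tbcf g hg M hM φ : ↥(polydisk n) →ᵇ ℂ)‖ := rfl
  rw [h, mul_comm]
  refine (BoundedContinuousFunction.norm_le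
    (mul_nonneg (norm_nonneg φ) (M_nonneg g M hM))).2 (fun z => ?_)
  exact (φ.le_opNorm _).trans (mul_le_mul_of_nonneg_left (hM _ z.2) (norm_nonneg φ))

/-- The linear map `φ ↦ φ ∘ g`, `X* → H^∞`, as a continuous linear map. -/
def Tlin (g : (Fin n → ℂ) → X) (hg : DifferentiableOn ℂ g (polydisk n))
    (M : ℝ) (hM : ∀ z ∈ polydisk n, ‖g z‖ ≤ M) : StrongDual ℂ X →L[ℂ] ↥(Hinf n) :=
  LinearMap.mkContinuous
    { toFun := Tbcf g hg M hM
      map_add' := fun φ ψ => by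
        apply Subtype.ext; apply BoundedContinuousFunction.ext; intro z; rfl
      map_smul' := fun c φ => by
        apply Subtype.ext; apply BoundedContinuousFunction.ext; intro z; rfl }
    M (fun φ => Tbcf_norm_le g hg M hM φ)

/-- The Gelfand-type extension. -/
def ghFun (g : (Fin n → ℂ) → X) (hg : DifferentiableOn ℂ g (polydisk n))
    (M : ℝ) (hM : ∀ z ∈ polydisk n, ‖g z‖ ≤ M) :
    ↥(clPolydisk n) → WeakDual ℂ (StrongDual ℂ X) :=
  fun x => ContinuousLinearMap.comp
    (show ↥(Hinf n) →L[ℂ] ℂ from x.1.1) (Tlin g hg M hM)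

theorem ghFun_apply (g : (Fin n → ℂ) → X) (hg : DifferentiableOn ℂ g (polydisk n))
    (M : ℝ) (hM : ∀ z ∈ polydisk n, ‖g z‖ ≤ M) (x : ↥(clPolydisk n)) (φ : StrongDual ℂ X) :
    ghFun g hg M hM x φ = x.1.1 (Tbcf g hg M hM φ) := rfl

theorem ghFun_clPoint (g : (Fin n → ℂ) → X) (hg : DifferentiableOn ℂ g (polydisk n))
    (M : ℝ) (hM : ∀ z ∈ polydisk n, ‖g z‖ ≤ M) (z : ↥(polydisk n)) (φ : StrongDual ℂ X) :
    ghFun g hg M hM (clPoint z) φ = φ (g ↑z) := rfl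

theorem ghFun_continuous (g : (Fin n → ℂ) → X) (hg : DifferentiableOn ℂ g (polydisk n))
    (M : ℝ) (hM : ∀ z ∈ polydisk n, ‖g z‖ ≤ M) : Continuous (ghFun g hg M hM) := by
  apply WeakBilin.continuous_of_continuous_eval
  intro φ
  exact (WeakDual.eval_continuous (Tbcf g hg M hM φ)).comp
    (continuous_subtype_val.comp continuous_subtype_val)

theorem dense_clPoint (x : ↥(clPolydisk n)) : x ∈ closure (Set.range (clPoint (n := n))) := by
  rw [closure_subtype]
  have h : Subtype.val '' Set.range (clPoint (n := n))
      = Set.range (evalCharacter (n := n)) := by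
    rw [← Set.range_comp]; rfl
  rw [h]
  exact x.2

end GelfandAux
namespace GelfandAux
open NormedSpace
variable {n : ℕ} {X : Type} [NormedAddCommGroup X] [NormedSpace ℂ X]

theorem ghFun_norm_le (g : (Fin n → ℂ) → X) (hg : DifferentiableOn ℂ g (polydisk n))
    (M : ℝ) (hM : ∀ z ∈ polydisk n, ‖g z‖ ≤ M) (x : ↥(clPolydisk n))
    (W' : Set ↥(polydisk n)) (C : ℝ) (hC : 0 ≤ C)
    (hx : x ∈ closure (clPoint '' W')) (hW : ∀ z ∈ W', ‖g ↑z‖ ≤ C) :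
    ‖WeakDual.toStrongDual (ghFun g hg M hM x)‖ ≤ C := by
  refine ContinuousLinearMap.opNorm_le_bound _ hC (fun φ => ?_)
  have hev : Continuous fun y : ↥(clPolydisk n) => (y.1.1 : WeakDual ℂ ↥(Hinf n)) (Tbcf g hg M hM φ) :=
    (WeakDual.eval_continuous (Tbcf g hg M hM φ)).comp
      (continuous_subtype_val.comp continuous_subtype_val)
  have hclosed : IsClosed {y : ↥(clPolydisk n) |
      ‖(y.1.1 : WeakDual ℂ ↥(Hinf n)) (Tbcf g hg M hM φ)‖ ≤ C * ‖φ‖} :=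
    isClosed_le hev.norm continuous_const
  have hsub : clPoint '' W' ⊆ {y : ↥(clPolydisk n) |
      ‖(y.1.1 : WeakDual ℂ ↥(Hinf n)) (Tbcf g hg M hM φ)‖ ≤ C * ‖φ‖} := by
    rintro _ ⟨z, hz, rfl⟩
    show ‖φ (g ↑z)‖ ≤ C * ‖φ‖
    calc ‖φ (g ↑z)‖ ≤ ‖φ‖ * ‖g ↑z‖ := φ.le_opNorm _
      _ ≤ ‖φ‖ * C := mul_le_mul_of_nonneg_left (hW z hz) (norm_nonneg φ)
      _ = C * ‖φ‖ := mul_comm _ _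
  exact hclosed.closure_subset_iff.2 hsub hx

theorem mem_closure_image_clPoint {Wt : Set ↥(clPolydisk n)} (hWt : IsOpen Wt)
    {x : ↥(clPolydisk n)} (hx : x ∈ Wt) :
    x ∈ closure (clPoint '' {z : ↥(polydisk n) | clPoint z ∈ Wt}) := by
  rw [_root_.mem_closure_iff]
  intro V hV hxV
  have h := (_root_.mem_closure_iff.mp (dense_clPoint x)) (V ∩ Wt) (hV.inter hWt) ⟨hxV, hx⟩
  rcases h with ⟨y, ⟨hyV, hyWt⟩, z, rfl⟩
  exact ⟨clPoint z, hyV, z, hyWt, rfl⟩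

theorem norm_le_ghFun_clPoint (g : (Fin n → ℂ) → X) (hg : DifferentiableOn ℂ g (polydisk n))
    (M : ℝ) (hM : ∀ z ∈ polydisk n, ‖g z‖ ≤ M) (z : ↥(polydisk n)) :
    ‖g ↑z‖ ≤ ‖WeakDual.toStrongDual (ghFun g hg M hM (clPoint z))‖ := by
  refine NormedSpace.norm_le_dual_bound ℂ _ (ContinuousLinearMap.opNorm_nonneg _) (fun φ => ?_)
  have h : φ (g ↑z) = WeakDual.toStrongDual (ghFun g hg M hM (clPoint z)) φ := rfl
  rw [h]
  exact ContinuousLinearMap.le_opNorm _ φ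

theorem real_le_biSup {ι : Type} {p : ι → Prop} {f : ι → ℝ} {B : ℝ} (hB : ∀ i, f i ≤ B)
    (hB0 : 0 ≤ B) {i : ι} (hi : p i) : f i ≤ ⨆ j, ⨆ (_ : p j), f j := by
  have h1 : f i ≤ ⨆ (_ : p i), f i :=
    le_ciSup (f := fun _ : p i => f i) ⟨f i, by rintro y ⟨_, rfl⟩; exact le_rfl⟩ hi
  refine h1.trans (le_ciSup (f := fun j => ⨆ (_ : p j), f j) ⟨B, ?_⟩ i)
  rintro y ⟨j, rfl⟩
  exact Real.iSup_le (fun _ => hB j) hB0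

theorem real_biSup_le {ι : Type} {p : ι → Prop} {f : ι → ℝ} {a : ℝ} (ha : 0 ≤ a)
    (h : ∀ i, p i → f i ≤ a) : (⨆ i, ⨆ (_ : p i), f i) ≤ a :=
  Real.iSup_le (fun i => Real.iSup_le (fun hi => h i hi) ha) ha

end GelfandAux
namespace GelfandAux
open NormedSpace
variable {n : ℕ} {X : Type} [NormedAddCommGroup X] [NormedSpace ℂ X]

/-- The canonical embedding into the bidual, with weak-* topology on the target. -/
def Jw : X → WeakDual ℂ (StrongDual ℂ X) := fun v => NormedSpace.inclusionInDoubleDualLi ℂ v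

theorem Jw_apply (v : X) (φ : StrongDual ℂ X) : Jw v φ = φ v := rfl

theorem Jw_continuous : Continuous (Jw (X := X)) := by
  apply WeakBilin.continuous_of_continuous_eval
  intro φ
  exact φ.continuous

theorem Jw_injective : Function.Injective (Jw (X := X)) := fun a b h =>
  (NormedSpace.inclusionInDoubleDualLi ℂ (E := X)).injective h

theorem compact_part (g : (Fin n → ℂ) → X) (hg : DifferentiableOn ℂ g (polydisk n))
    (M : ℝ) (hM : ∀ z ∈ polydisk n, ‖g z‖ ≤ M) (Kc : Set X) (hKcomp : IsCompact Kc)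
    (hKc : ∀ z ∈ polydisk n, g z ∈ Kc) :
    ∃ g₀ : ↥(clPolydisk n) → X, Continuous g₀ ∧
      ∀ (x : ↥(clPolydisk n)) (φ : StrongDual ℂ X), ghFun g hg M hM x φ = φ (g₀ x) := by
  have hK'cl : IsClosed (Jw '' Kc) := (hKcomp.image Jw_continuous).isClosed
  have hgh_eq : ∀ z : ↥(polydisk n), ghFun g hg M hM (clPoint z) = Jw (g ↑z) := by
    intro z
    rfl
  have hmem : ∀ x : ↥(clPolydisk n), ghFun g hg M hM x ∈ Jw '' Kc := by
    intro x
    have h1 : ghFun g hg M hM x ∈ closure (ghFun g hg M hM '' Set.range clPoint) :=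
      image_closure_subset_closure_image (ghFun_continuous g hg M hM)
        ⟨x, dense_clPoint x, rfl⟩
    have h2 : ghFun g hg M hM '' Set.range clPoint ⊆ Jw '' Kc := by
      rintro _ ⟨_, ⟨z, rfl⟩, rfl⟩
      exact ⟨g ↑z, hKc _ z.2, (hgh_eq z).symm⟩
    exact hK'cl.closure_subset_iff.2 h2 h1
  choose g₀ hg₀K hg₀eq using fun x => hmem x
  have : CompactSpace ↥Kc := isCompact_iff_compactSpace.mp hKcomp
  have hJK : Topology.IsClosedEmbedding (fun k : ↥Kc => Jw (k : X)) :=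
    (Jw_continuous.comp continuous_subtype_val).isClosedEmbedding
      (fun a b hab => Subtype.ext (Jw_injective hab))
  have hh : Continuous (fun x : ↥(clPolydisk n) => (⟨g₀ x, hg₀K x⟩ : ↥Kc)) := by
    rw [hJK.isEmbedding.continuous_iff]
    have : ((fun k : ↥Kc => Jw (k : X)) ∘ fun x : ↥(clPolydisk n) => (⟨g₀ x, hg₀K x⟩ : ↥Kc))
        = ghFun g hg M hM := funext (fun x => hg₀eq x)
    rw [this]
    exact ghFun_continuous g hg M hM
  refine ⟨g₀, continuous_subtype_val.comp hh, fun x φ => ?_⟩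
  rw [← hg₀eq x]
  rfl

end GelfandAux
/-- For a bounded holomorphic `g : 𝔻ⁿ → X` the Gelfand-type extension `gh` to the
maximal ideal space is weak-* continuous with values in the bidual `X**`, satisfies
`φ(gh(ev_z)) = φ(g(z))`, realizes the sup-norm equality
`sup_{x ∈ Wt} ‖gh(x)‖ = ‖g‖_{H^∞(W,X)}` over open `Wt ⊆ cl(𝔻ⁿ)` with
`W = Wt ∩ 𝔻ⁿ`, and takes values in `X` (norm-continuously) when the image of `g` is
contained in a norm-compact set. -/
theorem gelfand_extension_polydisk {n : ℕ} {X : Type} [NormedAddCommGroup X]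
    [NormedSpace ℂ X] [CompleteSpace X]
    (g : (Fin n → ℂ) → X) (hg : DifferentiableOn ℂ g (polydisk n))
    (M : ℝ) (hM : ∀ z ∈ polydisk n, ‖g z‖ ≤ M) :
    ∃ gh : ↥(clPolydisk n) → WeakDual ℂ (StrongDual ℂ X),
      Continuous gh ∧
      (∀ (z : ↥(polydisk n)) (φ : StrongDual ℂ X),
        gh (clPoint z) φ = φ (g (z : Fin n → ℂ))) ∧
      (∀ Wt : Set ↥(clPolydisk n), IsOpen Wt →
        (⨆ x ∈ Wt, ‖WeakDual.toStrongDual (gh x)‖)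
          = ⨆ z ∈ {z : ↥(polydisk n) | clPoint z ∈ Wt}, ‖g (z : Fin n → ℂ)‖) ∧
      ((∃ Kc : Set X, IsCompact Kc ∧ ∀ z ∈ polydisk n, g z ∈ Kc) →
        ∃ g₀ : ↥(clPolydisk n) → X, Continuous g₀ ∧
          ∀ (x : ↥(clPolydisk n)) (φ : StrongDual ℂ X),
            gh x φ = φ (g₀ x)) := by
  refine ⟨GelfandAux.ghFun g hg M hM, GelfandAux.ghFun_continuous g hg M hM,
    fun z φ => rfl, ?_, ?_⟩
  · intro Wt hWt
    have hR0 : (0 : ℝ) ≤ ⨆ z ∈ {z : ↥(polydisk n) | clPoint z ∈ Wt}, ‖g (z : Fin n → ℂ)‖ :=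
      Real.iSup_nonneg fun z => Real.iSup_nonneg fun _ => norm_nonneg _
    apply le_antisymm
    · refine GelfandAux.real_biSup_le hR0 (fun x hx => ?_)
      refine GelfandAux.ghFun_norm_le g hg M hM x _ _ hR0
        (GelfandAux.mem_closure_image_clPoint hWt hx) (fun z hz => ?_)
      exact GelfandAux.real_le_biSup (fun z' => hM _ z'.2)
        (GelfandAux.M_nonneg g M hM) hz
    · have hL0 : (0 : ℝ) ≤ ⨆ x ∈ Wt, ‖WeakDual.toStrongDual (GelfandAux.ghFun g hg M hM x)‖ :=
        Real.iSup_nonneg fun x => Real.iSup_nonneg fun _ => ContinuousLinearMap.opNorm_nonneg _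
      refine GelfandAux.real_biSup_le hL0 (fun z hz => ?_)
      refine (GelfandAux.norm_le_ghFun_clPoint g hg M hM z).trans ?_
      refine GelfandAux.real_le_biSup (p := (· ∈ Wt)) (i := clPoint z)
        (f := fun x => ‖WeakDual.toStrongDual (GelfandAux.ghFun g hg M hM x)‖)
        (fun x => ?_) (le_max_right M 0) hz
      refine GelfandAux.ghFun_norm_le g hg M hM x Set.univ (max M 0) (le_max_right M 0)
        (by rw [Set.image_univ]; exact GelfandAux.dense_clPoint x)
        (fun z' _ => le_max_of_le_left (hM _ z'.2))
  · rintro ⟨Kc, hKcomp, hKc⟩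
    exact GelfandAux.compact_part g hg M hM Kc hKcomp hKc

end
end
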